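/- arXiv:1501.04380 — 4 statements merged into one kernel-verified Lean document; each statement's English description precedes it below -/
import Mathlib

section
/- Let m ≥ 1, let d : Fin m → ℕ be a function with d(i) ≥ 1 for all i, and define the degree of a word w ∈ List(Fin m) to be deg(w) = ∑_{i ∈ w} d(i). Let α_1, …, α_n be nonempty words over Fin m that are combinatorially free, i.e. (a) for i ≠ j, α_i is not a contiguous subword (infix) of α_j, and (b) whenever α_i = x₁ ++ y₁ and α_j = x₂ ++ y₂ with x₁, y₁, x₂, y₂ all nonempty words, then y₁ ≠ x₂. For each k ∈ ℕ let c_k be the (finite) number of words w over Fin m of degree k containing none of α_1, …, α_n as a contiguous subword. Then in ℤ⟦X⟧: (1 - ∑_{i=1}^m X^{d(i)} + ∑_{j=1}^n X^{deg(α_j)}) · ∑_{k≥0} c_k X^k = 1. -/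
open List Set

namespace AnickAux

variable {β : Type*}

lemma ncard_iUnion_fin {N : ℕ} (s : Fin N → Set β) (hfin : ∀ i, (s i).Finite)
    (hdisj : ∀ i j, i ≠ j → Disjoint (s i) (s j)) :
    (⋃ i, s i).ncard = ∑ i, (s i).ncard := by
  induction N with
  | zero => simp
  | succ N ih =>
    have hun : (⋃ i, s i) = s 0 ∪ ⋃ i : Fin N, s i.succ := by
      ext x; simp [Fin.exists_fin_succ]
    have hdis : Disjoint (s 0) (⋃ i : Fin N, s i.succ) := by
      rw [Set.disjoint_iUnion_right]
      exact fun i => hdisj 0 i.succ (Fin.succ_ne_zero i).symm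
    rw [hun, Set.ncard_union_eq hdis (hfin 0) (Set.finite_iUnion fun i => hfin i.succ),
      Fin.sum_univ_succ, ih (fun i => s i.succ) (fun i => hfin i.succ)
        (fun i j hij => hdisj i.succ j.succ (by simpa using hij))]

lemma overlap {b u v : List β} (h : b <:+: u ++ v) (hu : ¬ b <:+: u) (hv : ¬ b <:+: v) :
    ∃ s t, b = s ++ t ∧ s ≠ [] ∧ t ≠ [] ∧ s <:+ u ∧ t <+: v := by
  obtain ⟨x, y, hxy⟩ := h
  rw [List.append_assoc] at hxy
  rcases List.append_eq_append_iff.1 hxy with ⟨a', ha1, ha2⟩ | ⟨c', hc1, hc2⟩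
  · rcases List.append_eq_append_iff.1 ha2 with ⟨a₂, hb1, _⟩ | ⟨t, hb1, hb2⟩
    · exact absurd ⟨x, a₂, by rw [ha1, hb1]; simp⟩ hu
    · refine ⟨a', t, hb1, ?_, ?_, ⟨x, ha1.symm⟩, ⟨y, hb2.symm⟩⟩
      · rintro rfl
        simp only [List.nil_append] at hb1
        exact hv ⟨[], y, by simp [hb1, ← hb2]⟩
      · rintro rfl
        simp only [List.append_nil] at hb1
        exact hu ⟨x, [], by simp [hb1, ← ha1]⟩
  · exact absurd ⟨c', y, by rw [hc2]; simp⟩ hv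

variable {m n : ℕ}

def deg (d : Fin m → ℕ) (w : List (Fin m)) : ℕ := (w.map d).sum

def Adm (α : Fin n → List (Fin m)) (w : List (Fin m)) : Prop := ∀ j, ¬ (α j <:+: w)

variable {d : Fin m → ℕ} {α : Fin n → List (Fin m)}

lemma deg_append (u v : List (Fin m)) : deg d (u ++ v) = deg d u + deg d v := by simp [deg]

lemma deg_singleton (i : Fin m) : deg d [i] = d i := by simp [deg]

lemma length_le_deg (hd : ∀ i, 1 ≤ d i) (w : List (Fin m)) : w.length ≤ deg d w := by
  induction w with
  | nil => simp [deg]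
  | cons a t ih =>
    have := hd a
    simp only [deg, List.map_cons, List.sum_cons, List.length_cons] at *
    omega

lemma finite_deg_le (hd : ∀ i, 1 ≤ d i) (k : ℕ) :
    {w : List (Fin m) | deg d w ≤ k}.Finite :=
  (List.finite_length_le (Fin m) k).subset fun w hw => (length_le_deg hd w).trans hw

lemma Adm.infix {w u : List (Fin m)} (h : Adm α w) (hu : u <:+: w) : Adm α u :=
  fun j hj => h j (hj.trans hu)

lemma adm_nil (hne : ∀ j, α j ≠ []) : Adm α ([] : List (Fin m)) := by
  intro j hj
  exact hne j (List.eq_nil_of_infix_nil hj)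

def S (d : Fin m → ℕ) (α : Fin n → List (Fin m)) (k : ℕ) : Set (List (Fin m)) :=
  {w | deg d w = k ∧ Adm α w}

lemma S_finite (hd : ∀ i, 1 ≤ d i) (k : ℕ) : (S d α k).Finite :=
  (finite_deg_le hd k).subset fun _ hw => le_of_eq hw.1

theorem key (hd : ∀ i, 1 ≤ d i) (hne : ∀ j, α j ≠ [])
    (ha : ∀ i j, i ≠ j → ¬ (α i <:+: α j))
    (hb : ∀ i j : Fin n, ∀ x₁ y₁ x₂ y₂ : List (Fin m),
      x₁ ≠ [] → y₁ ≠ [] → x₂ ≠ [] → y₂ ≠ [] →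
      α i = x₁ ++ y₁ → α j = x₂ ++ y₂ → y₁ ≠ x₂)
    (k : ℕ) (hk : k ≠ 0) :
    (S d α k).ncard
      + ∑ j : Fin n, (if deg d (α j) ≤ k then (S d α (k - deg d (α j))).ncard else 0)
      = ∑ i : Fin m, (if d i ≤ k then (S d α (k - d i)).ncard else 0) := by
  classical
  -- base sets
  set P : Fin m → Set (List (Fin m)) := fun i => {w | deg d w + d i = k ∧ Adm α w} with hP
  set Q : Fin n → Set (List (Fin m)) := fun j => {p | deg d p + deg d (α j) = k ∧ Adm α p}
    with hQ
  set T : Set (List (Fin m)) := {v | deg d v = k ∧ v ≠ [] ∧ Adm α v.dropLast} with hTdef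
  set U : Set (List (Fin m)) := {v | deg d v = k ∧ ¬ Adm α v ∧ Adm α v.dropLast} with hUdef
  have hPfin : ∀ i, (P i).Finite := fun i =>
    (finite_deg_le hd k).subset fun w hw => by have := hw.1; simp only [mem_setOf_eq]; omega
  have hQfin : ∀ j, (Q j).Finite := fun j =>
    (finite_deg_le hd k).subset fun w hw => by have := hw.1; simp only [mem_setOf_eq]; omega
  have hTfin : T.Finite :=
    (finite_deg_le hd k).subset fun w hw => le_of_eq hw.1
  have hUfin : U.Finite :=
    (finite_deg_le hd k).subset fun w hw => le_of_eq hw.1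
  have hPcard : ∀ i, (P i).ncard = if d i ≤ k then (S d α (k - d i)).ncard else 0 := by
    intro i
    by_cases h : d i ≤ k
    · rw [if_pos h]
      congr 1
      ext w
      simp only [hP, S, mem_setOf_eq]
      constructor
      · rintro ⟨h1, h2⟩; exact ⟨by omega, h2⟩
      · rintro ⟨h1, h2⟩; exact ⟨by omega, h2⟩
    · rw [if_neg h]
      have : P i = ∅ := eq_empty_iff_forall_notMem.2 fun w hw => h (by have := hw.1; omega)
      simp [this]
  have hQcard : ∀ j, (Q j).ncard
      = if deg d (α j) ≤ k then (S d α (k - deg d (α j))).ncard else 0 := by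
    intro j
    by_cases h : deg d (α j) ≤ k
    · rw [if_pos h]
      congr 1
      ext w
      simp only [hQ, S, mem_setOf_eq]
      constructor
      · rintro ⟨h1, h2⟩; exact ⟨by omega, h2⟩
      · rintro ⟨h1, h2⟩; exact ⟨by omega, h2⟩
    · rw [if_neg h]
      have : Q j = ∅ := eq_empty_iff_forall_notMem.2 fun w hw => h (by have := hw.1; omega)
      simp [this]
  -- T as a disjoint union over the last letter
  have hT : (⋃ i, (fun w => w ++ [i]) '' P i) = T := by
    ext v
    simp only [mem_iUnion, mem_image, hP, hTdef, mem_setOf_eq]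
    constructor
    · rintro ⟨i, w, ⟨hw1, hw2⟩, rfl⟩
      refine ⟨by rw [deg_append, deg_singleton]; omega, by simp, ?_⟩
      rwa [List.dropLast_concat]
    · rintro ⟨hv, hvne, hvadm⟩
      refine ⟨v.getLast hvne, v.dropLast, ⟨?_, hvadm⟩, List.dropLast_append_getLast hvne⟩
      have h1 := List.dropLast_append_getLast hvne
      have h2 : deg d (v.dropLast ++ [v.getLast hvne]) = k := by rw [h1]; exact hv
      rw [deg_append, deg_singleton] at h2
      omega
  have hTcard : T.ncard = ∑ i : Fin m, (if d i ≤ k then (S d α (k - d i)).ncard else 0) := by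
    rw [← hT, ncard_iUnion_fin _ (fun i => (hPfin i).image _) ?_]
    · refine Finset.sum_congr rfl fun i _ => ?_
      rw [Set.ncard_image_of_injective _ fun a b hab => List.append_cancel_right hab]
      exact hPcard i
    · intro i i' hii
      rw [Set.disjoint_left]
      rintro v ⟨w, _, rfl⟩ ⟨w', _, heq⟩
      have := (List.append_inj' heq rfl).2
      simp only [List.cons.injEq] at this
      exact hii this.1.symm
  -- uniqueness of the `α` suffix
  have suffix_unique : ∀ (v : List (Fin m)) (j j' : Fin n),
      α j <:+ v → α j' <:+ v → j = j' := by
    intro v j j' h1 h2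
    by_contra hjj
    rcases List.suffix_or_suffix_of_suffix h1 h2 with h | h
    · exact ha j j' hjj h.isInfix
    · exact ha j' j (Ne.symm hjj) h.isInfix
  -- U as a disjoint union over the suffix
  have hU : (⋃ j, (fun p => p ++ α j) '' Q j) = U := by
    ext v
    simp only [mem_iUnion, mem_image, hQ, hUdef, mem_setOf_eq]
    constructor
    · rintro ⟨j, p, ⟨hp1, hp2⟩, rfl⟩
      refine ⟨by rw [deg_append]; omega, ?_, ?_⟩
      · intro hadm
        exact hadm j ⟨p, [], by simp⟩
      · -- dropLast (p ++ α j) = p ++ dropLast (α j) is admissible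
        rw [List.dropLast_append_of_ne_nil (hne j)]
        intro j' hinf
        by_cases hin : α j' <:+: (α j).dropLast
        · have hinfj : α j' <:+: α j := hin.trans (List.dropLast_prefix (α j)).isInfix
          rcases eq_or_ne j' j with rfl | hjj
          · have h1 := hinfj.length_le  -- fake to use below
            have h2 := hin.length_le
            have h3 := List.length_dropLast (xs := α j')
            have h4 : (α j').length ≠ 0 := by simpa using hne j'
            omega
          · exact ha j' j hjj hinfj
        · obtain ⟨s, t, hst, hs, ht, _, htv⟩ := overlap hinf (hp2 j') hin
          have htp : t <+: α j := htv.trans (List.dropLast_prefix (α j))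
          obtain ⟨r, hr⟩ := htp
          have hrne : r ≠ [] := by
            rintro rfl
            have h1 := htv.length_le
            have h2 := List.length_dropLast (xs := α j)
            have h3 : (α j).length ≠ 0 := by simpa using hne j
            have h4 : (α j).length = t.length := by rw [← hr]; simp
            omega
          exact hb j' j s t t r hs ht ht hrne hst hr.symm rfl
    · rintro ⟨hv, hvnadm, hvadm⟩
      have : ∃ j, α j <:+: v := by
        by_contra h
        push_neg at h
        exact hvnadm h
      obtain ⟨j, x, y, hxy⟩ := this
      have hy : y = [] := by
        rcases List.eq_nil_or_concat y with rfl | ⟨y', b, rfl⟩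
        · rfl
        · exfalso
          apply hvadm j
          rw [List.concat_eq_append] at hxy
          refine ⟨x, y', ?_⟩
          rw [← hxy, ← List.append_assoc, List.dropLast_concat]
      subst hy
      simp only [List.append_nil] at hxy
      refine ⟨j, x, ⟨?_, ?_⟩, hxy⟩
      · rw [← hxy, deg_append] at hv
        omega
      · -- x is admissible: it is a prefix of v.dropLast
        have hpre : x <+: v.dropLast := by
          rw [← hxy, List.dropLast_append_of_ne_nil (hne j)]
          exact ⟨(α j).dropLast, rfl⟩
        exact hvadm.infix hpre.isInfix
  have hUcard : U.ncard
      = ∑ j : Fin n, (if deg d (α j) ≤ k then (S d α (k - deg d (α j))).ncard else 0) := by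
    rw [← hU, ncard_iUnion_fin _ (fun j => (hQfin j).image _) ?_]
    · refine Finset.sum_congr rfl fun j _ => ?_
      rw [Set.ncard_image_of_injective _ fun a b hab => List.append_cancel_right hab]
      exact hQcard j
    · intro j j' hjj
      rw [Set.disjoint_left]
      rintro v ⟨p, _, rfl⟩ ⟨p', _, heq⟩
      exact hjj (suffix_unique _ j j' ⟨p, rfl⟩ ⟨p', heq⟩)
  -- T is the disjoint union of S k and U
  have hTSU : T = S d α k ∪ U := by
    ext v
    simp only [hTdef, hUdef, S, mem_setOf_eq, mem_union]
    constructor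
    · rintro ⟨hv, hvne, hvadm⟩
      by_cases h : Adm α v
      · exact Or.inl ⟨hv, h⟩
      · exact Or.inr ⟨hv, h, hvadm⟩
    · rintro (⟨hv, hadm⟩ | ⟨hv, hnadm, hvadm⟩)
      · have hvne : v ≠ [] := by
          rintro rfl
          exact hk (by simpa [deg] using hv.symm)
        exact ⟨hv, hvne, hadm.infix (List.dropLast_prefix v).isInfix⟩
      · have hvne : v ≠ [] := by
          rintro rfl
          exact hnadm (adm_nil hne)
        exact ⟨hv, hvne, hvadm⟩
  have hdisjSU : Disjoint (S d α k) U := by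
    rw [Set.disjoint_left]
    rintro v ⟨_, hadm⟩ ⟨_, hnadm, _⟩
    exact hnadm hadm
  have := hTSU ▸ hTcard
  rw [Set.ncard_union_eq hdisjSU (S_finite hd k) hUfin] at this
  rw [← this, hUcard]

end AnickAux

/-- Anick's Hilbert series identity for the quotient of a free associative algebra on
generators of degrees `d i` by the ideal generated by a combinatorially free set of
monomials `α 0, …, α (n-1)`. -/

theorem stmt_2 (m : ℕ) (hm : 1 ≤ m) (d : Fin m → ℕ) (hd : ∀ i, 1 ≤ d i)
    (n : ℕ) (α : Fin n → List (Fin m)) (hne : ∀ j, α j ≠ [])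
    (ha : ∀ i j, i ≠ j → ¬ (α i <:+: α j))
    (hb : ∀ i j : Fin n, ∀ x₁ y₁ x₂ y₂ : List (Fin m),
      x₁ ≠ [] → y₁ ≠ [] → x₂ ≠ [] → y₂ ≠ [] →
      α i = x₁ ++ y₁ → α j = x₂ ++ y₂ → y₁ ≠ x₂) :
    (1 - ∑ i : Fin m, (PowerSeries.X : PowerSeries ℤ) ^ d i
        + ∑ j : Fin n, (PowerSeries.X : PowerSeries ℤ) ^ ((α j).map d).sum) *
      PowerSeries.mk (fun k =>
        ({w : List (Fin m) | (w.map d).sum = k ∧ ∀ j, ¬ (α j <:+: w)}.ncard : ℤ)) = 1 := by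
  classical
  have hSS : ∀ k : ℕ, {w : List (Fin m) | (w.map d).sum = k ∧ ∀ j, ¬ (α j <:+: w)}
      = AnickAux.S d α k := fun k => rfl
  set F : PowerSeries ℤ := PowerSeries.mk (fun k => ((AnickAux.S d α k).ncard : ℤ)) with hF
  have hFeq : PowerSeries.mk (fun k =>
      ({w : List (Fin m) | (w.map d).sum = k ∧ ∀ j, ¬ (α j <:+: w)}.ncard : ℤ)) = F := by
    simp only [hF, hSS]
  rw [hFeq]
  have hc0 : AnickAux.S d α 0 = {([] : List (Fin m))} := by
    ext w
    simp only [AnickAux.S, Set.mem_setOf_eq, Set.mem_singleton_iff]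
    constructor
    · rintro ⟨h1, _⟩
      have := AnickAux.length_le_deg hd w
      rw [h1] at this
      exact List.eq_nil_of_length_eq_zero (Nat.le_zero.1 this)
    · rintro rfl
      exact ⟨rfl, AnickAux.adm_nil hne⟩
  have hdegα : ∀ j, 1 ≤ AnickAux.deg d (α j) := by
    intro j
    have h1 := AnickAux.length_le_deg hd (α j)
    have h2 : (α j).length ≠ 0 := by simpa using hne j
    omega
  apply PowerSeries.ext
  intro k
  have hexp : (1 - ∑ i : Fin m, (PowerSeries.X : PowerSeries ℤ) ^ d i
        + ∑ j : Fin n, (PowerSeries.X : PowerSeries ℤ) ^ ((α j).map d).sum) * F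
      = F - ∑ i : Fin m, (PowerSeries.X : PowerSeries ℤ) ^ d i * F
        + ∑ j : Fin n, (PowerSeries.X : PowerSeries ℤ) ^ ((α j).map d).sum * F := by
    rw [← Finset.sum_mul, ← Finset.sum_mul]; ring
  rw [hexp]
  simp only [map_add, map_sub, map_sum, PowerSeries.coeff_X_pow_mul', PowerSeries.coeff_mk,
    PowerSeries.coeff_one]
  have hdeg' : ∀ j, ((α j).map d).sum = AnickAux.deg d (α j) := fun _ => rfl
  by_cases hk : k = 0
  · subst hk
    rw [if_pos rfl, Finset.sum_eq_zero, Finset.sum_eq_zero]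
    · simp only [hF, PowerSeries.coeff_mk, hc0]
      simp
    · intro j _
      rw [if_neg]
      rw [hdeg' j]
      have := hdegα j
      omega
    · intro i _
      rw [if_neg]
      have := hd i
      omega
  · have hkey := AnickAux.key hd hne ha hb k hk
    have hcast : ((AnickAux.S d α k).ncard : ℤ)
        + ∑ j : Fin n, (if AnickAux.deg d (α j) ≤ k
            then ((AnickAux.S d α (k - AnickAux.deg d (α j))).ncard : ℤ) else 0)
        = ∑ i : Fin m, (if d i ≤ k then ((AnickAux.S d α (k - d i)).ncard : ℤ) else 0) := by
      exact_mod_cast hkey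
    rw [if_neg hk]
    simp only [hdeg', hF, PowerSeries.coeff_mk]
    linarith [hcast]
end

section
/- Let M be a Coxeter matrix on a finite set S and suppose the associated Coxeter group W = W(M) is infinite. For i ∈ S and w ∈ W, say that i is a left descent of w if ℓ(s_i w) < ℓ(w). Then for every k ∈ ℕ: ∑_{I ⊆ S} (-1)^{|I|} · #{ w ∈ W : ℓ(w) = k and no i ∈ I is a left descent of w } = 0. (This is the coefficient form of Steinberg's identity ∑_{I ⊆ S} (-1)^{|I|} W(t)/W_I(t) = 0, where W_I(t) is the Poincaré series of the standard parabolic subgroup W_I and W(t)/W_I(t) is the generating function counting the minimal-length coset representatives of W_I in W, these being exactly the elements with no left descent in I.) -/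
set_option linter.unusedSectionVars false

namespace SteinbergAux

open List CoxeterSystem

variable {B : Type*} {W : Type*} [Group W] {M : CoxeterMatrix B} (cs : CoxeterSystem M W)

local prefix:100 "s" => cs.simple
local prefix:100 "π" => cs.wordProd
local prefix:100 "ℓ" => cs.length

open Classical in
noncomputable def ind (a t : W) : ZMod 2 := if t = a then 1 else 0

lemma ind_self (a : W) : ind a a = 1 := by simp [ind]

lemma ind_ne {a t : W} (h : t ≠ a) : ind a t = 0 := by simp [ind, h]

lemma ind_conj (p a t : W) : ind a (p * t * p⁻¹) = ind (p⁻¹ * a * p) t := by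
  unfold ind
  congr 1
  simp only [eq_iff_iff]
  constructor
  · intro h
    have : p⁻¹ * (p * t * p⁻¹) * p = p⁻¹ * a * p := by rw [h]
    rw [← this]; group
  · intro h; rw [h]; group

lemma conj_conj (a c x : W) : a * (c * x * c⁻¹) * a⁻¹ = (a * c) * x * (a * c)⁻¹ := by group

noncomputable def sigma (i : B) : Equiv.Perm (W × ZMod 2) where
  toFun x := (s i * x.1 * (s i)⁻¹, x.2 + ind (s i) x.1)
  invFun x := (s i * x.1 * (s i)⁻¹, x.2 + ind (s i) x.1)
  left_inv := by
    rintro ⟨t, ε⟩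
    simp only [Prod.mk.injEq]
    constructor
    · rw [conj_conj, cs.simple_mul_simple_self]; group
    · rw [ind_conj, inv_mul_cancel, one_mul, add_assoc, CharTwo.add_self_eq_zero, add_zero]
  right_inv := by
    rintro ⟨t, ε⟩
    simp only [Prod.mk.injEq]
    constructor
    · rw [conj_conj, cs.simple_mul_simple_self]; group
    · rw [ind_conj, inv_mul_cancel, one_mul, add_assoc, CharTwo.add_self_eq_zero, add_zero]

lemma sigma_apply (i : B) (t : W) (ε : ZMod 2) :
    sigma cs i (t, ε) = (s i * t * (s i)⁻¹, ε + ind (s i) t) := rfl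

lemma aux1 (i j : B) (k : ℕ) :
    s j * (s i * s j) ^ k = (s j * s i) ^ k * s j := by
  have h : SemiconjBy (s j) (s i * s j) (s j * s i) := by
    unfold SemiconjBy; group
  exact (h.pow_right k).eq

lemma hp_aux (i j : B) (k : ℕ) : ((s i * s j : W) ^ k)⁻¹ = (s j * s i) ^ k := by
  rw [← inv_pow, mul_inv_rev, cs.inv_simple, cs.inv_simple]

lemma aux2 (i j : B) (k : ℕ) :
    ((s i * s j) ^ k)⁻¹ * s j * (s i * s j) ^ k = (s j * s i) ^ (2 * k) * s j := by
  rw [hp_aux, mul_assoc, aux1, ← mul_assoc, ← pow_add, two_mul]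

lemma aux3 (i j : B) (k : ℕ) :
    (s j * (s i * s j) ^ k)⁻¹ * s i * (s j * (s i * s j) ^ k)
      = (s j * s i) ^ (2 * k + 1) * s j := by
  rw [mul_inv_rev, hp_aux, cs.inv_simple, aux1]
  rw [show 2 * k + 1 = k + (k + 1) by ring, pow_add, pow_succ']
  generalize (s j * s i : W) ^ k = q
  group

lemma sigma_pow_apply (i j : B) (k : ℕ) (t : W) (ε : ZMod 2) :
    ((sigma cs i * sigma cs j) ^ k) (t, ε) =
      ((s i * s j) ^ k * t * ((s i * s j) ^ k)⁻¹,
        ε + ∑ r ∈ Finset.range (2 * k), ind ((s j * s i) ^ r * s j) t) := by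
  induction k with
  | zero => simp
  | succ k ih =>
    rw [pow_succ', Equiv.Perm.mul_apply, ih, Equiv.Perm.mul_apply, sigma_apply, sigma_apply]
    rw [Prod.mk.injEq]
    constructor
    · rw [pow_succ' (s i * s j) k]
      generalize (s i * s j : W) ^ k = p
      group
    · rw [conj_conj, ind_conj, ind_conj, aux2, aux3,
        (by ring : 2 * (k + 1) = (2 * k) + 1 + 1), Finset.sum_range_succ,
        Finset.sum_range_succ]
      dsimp only
      abel

lemma isLiftable : M.IsLiftable (fun i => sigma cs i) := by
  intro i j
  apply Equiv.ext
  rintro ⟨t, ε⟩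
  rw [show ((fun i => sigma cs i) i * (fun i => sigma cs i) j) = sigma cs i * sigma cs j
    from rfl, sigma_pow_apply, cs.simple_mul_simple_pow i j]
  set m := M i j with hm
  have hsum : ∑ r ∈ Finset.range (2 * m), ind ((s j * s i) ^ r * s j) t = 0 := by
    rw [two_mul, Finset.range_eq_Ico,
      ← Finset.sum_Ico_consecutive _ (Nat.zero_le m) (Nat.le_add_right m m)]
    have h2 : ∑ r ∈ Finset.Ico m (m + m), ind ((s j * s i) ^ r * s j) t
        = ∑ r ∈ Finset.Ico 0 m, ind ((s j * s i) ^ r * s j) t := by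
      rw [Finset.sum_Ico_eq_sum_range, Nat.add_sub_cancel, Finset.sum_Ico_eq_sum_range,
        Nat.sub_zero]
      exact Finset.sum_congr rfl (fun r _ => by
        rw [zero_add, pow_add, cs.simple_mul_simple_pow' i j, one_mul])
    rw [h2]
    exact CharTwo.add_self_eq_zero _
  rw [hsum, add_zero]
  simp

noncomputable def phi : W →* Equiv.Perm (W × ZMod 2) :=
  cs.lift ⟨fun i => sigma cs i, isLiftable cs⟩

noncomputable def nu (w t : W) : ZMod 2 := ((phi cs w) (t, 0)).2

lemma phi_simple (i : B) : phi cs (s i) = sigma cs i :=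
  cs.lift_apply_simple (isLiftable cs) i

lemma phi_apply (w : W) : ∀ t : W, ∀ ε : ZMod 2,
    phi cs w (t, ε) = (w * t * w⁻¹, ε + nu cs w t) := by
  induction w using cs.simple_induction_left with
  | one =>
    intro t ε
    unfold nu
    rw [map_one]
    simp
  | mul_simple_left w i ih =>
    intro t ε
    unfold nu
    rw [map_mul, Equiv.Perm.mul_apply, Equiv.Perm.mul_apply, ih t ε, ih t 0,
      phi_simple, sigma_apply, sigma_apply]
    rw [Prod.mk.injEq]
    constructor
    · rw [conj_conj]
    · dsimp only; abel

lemma nu_mul (x y t : W) : nu cs (x * y) t = nu cs y t + nu cs x (y * t * y⁻¹) := by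
  calc nu cs (x * y) t = ((phi cs x) ((phi cs y) (t, 0))).2 := by
        unfold nu; rw [map_mul, Equiv.Perm.mul_apply]
    _ = ((phi cs x) (y * t * y⁻¹, 0 + nu cs y t)).2 := by rw [phi_apply cs y t 0]
    _ = (0 + nu cs y t) + nu cs x (y * t * y⁻¹) := by
        rw [phi_apply cs x (y * t * y⁻¹) (0 + nu cs y t)]
    _ = nu cs y t + nu cs x (y * t * y⁻¹) := by rw [zero_add]

lemma nu_one (t : W) : nu cs 1 t = 0 := by
  unfold nu; rw [map_one]; simp

lemma nu_simple (i : B) (t : W) : nu cs (s i) t = ind (s i) t := by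
  unfold nu; rw [phi_simple, sigma_apply, zero_add]

lemma nu_inv (w t : W) : nu cs w⁻¹ t = nu cs w (w⁻¹ * t * w) := by
  have h := nu_mul cs w w⁻¹ t
  rw [mul_inv_cancel, nu_one, inv_inv] at h
  have h' := congrArg (· + nu cs w (w⁻¹ * t * w)) h.symm
  simpa [add_assoc, CharTwo.add_self_eq_zero] using h'


lemma nu_wordProd_exists (ω : List B) (t : W) (h : nu cs (π ω) t = 1) :
    ∃ j, j < ω.length ∧ (cs.rightInvSeq ω).getD j 1 = t := by
  induction ω using List.reverseRecOn generalizing t with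
  | nil =>
    rw [cs.wordProd_nil, nu_one] at h
    exact absurd h (by decide)
  | append_singleton ω i ih =>
    rw [← List.concat_eq_append, cs.wordProd_concat, nu_mul, nu_simple] at h
    by_cases hti : t = s i
    · refine ⟨ω.length, ?_, ?_⟩
      · simp
      · rw [← List.concat_eq_append, cs.rightInvSeq_concat, List.concat_eq_append,
          List.getD_append_right _ _ _ _ (by simp), List.length_map,
          cs.length_rightInvSeq, Nat.sub_self]
        simp [hti]
    · rw [ind_ne hti, zero_add] at h
      obtain ⟨j, hj, hgd⟩ := ih _ h
      refine ⟨j, by simp; omega, ?_⟩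
      rw [← List.concat_eq_append, cs.rightInvSeq_concat, List.concat_eq_append,
        List.getD_append _ _ _ _ (by simp [cs.length_rightInvSeq]; omega),
        (by simp : (1 : W) = ⇑(MulAut.conj (s i)) 1), List.getD_map, hgd]
      simp only [MulAut.conj_apply]
      rw [conj_conj, cs.simple_mul_simple_self, one_mul, inv_one, mul_one]

/-- Strong exchange-type inequality: if `ν w t = 1` then right multiplication by `t`
shortens `w`. -/
lemma length_lt_of_nu_eq_one {w t : W} (h : nu cs w t = 1) : ℓ (w * t) < ℓ w := by
  obtain ⟨ω, hred, rfl⟩ := cs.exists_reduced_word' w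
  obtain ⟨j, hj, hgd⟩ := nu_wordProd_exists cs ω t h
  have hkey := cs.wordProd_mul_getD_rightInvSeq ω j
  rw [hgd] at hkey
  calc ℓ (π ω * t) = ℓ (π (ω.eraseIdx j)) := by rw [hkey]
    _ ≤ (ω.eraseIdx j).length := cs.length_wordProd_le _
    _ < ω.length := by rw [← List.length_eraseIdx_add_one hj]; omega
    _ = ℓ (π ω) := hred.symm

lemma nu_refl_self {t : W} (ht : cs.IsReflection t) : nu cs t t = 1 := by
  obtain ⟨u, i, rfl⟩ := ht
  have h1 : nu cs (u * s i * u⁻¹) (u * s i * u⁻¹)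
      = nu cs u⁻¹ (u * s i * u⁻¹) + nu cs (u * s i) (s i) := by
    rw [nu_mul cs (u * s i) u⁻¹]
    congr 2
    group
  have h2 : nu cs (u * s i) (s i) = 1 + nu cs u (s i) := by
    rw [nu_mul cs u (s i), nu_simple, ind_self]
    congr 2
    group
  have h3 : nu cs u⁻¹ (u * s i * u⁻¹) = nu cs u (s i) := by
    rw [nu_inv]
    congr 1
    group
  rw [h1, h2, h3, ← add_assoc, add_comm (nu cs u (s i)) 1, add_assoc,
    CharTwo.add_self_eq_zero, add_zero]

lemma nu_eq_one_iff {t : W} (ht : cs.IsReflection t) (w : W) :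
    nu cs w t = 1 ↔ ℓ (w * t) < ℓ w := by
  constructor
  · exact fun h => length_lt_of_nu_eq_one cs h
  · intro h
    by_contra hne
    have h0 : nu cs w t = 0 := by
      revert hne
      generalize nu cs w t = x
      revert x; decide
    have h1 : nu cs (w * t) t = 1 := by
      rw [nu_mul cs w t, (by group : t * t * t⁻¹ = t), h0, add_zero, nu_refl_self cs ht]
    have h2 := length_lt_of_nu_eq_one cs h1
    rw [mul_assoc, ht.mul_self, mul_one] at h2
    omega


/-- One step of the Bruhat order: multiply on the right by a reflection, increasing length. -/
def bstep (a b : W) : Prop := ∃ t, cs.IsReflection t ∧ b = a * t ∧ ℓ a < ℓ b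

/-- The Bruhat order (as a preorder relation). -/
def ble : W → W → Prop := Relation.ReflTransGen (bstep cs)

lemma ble_length_le {a b : W} (h : ble cs a b) : ℓ a ≤ ℓ b := by
  induction h with
  | refl => exact le_refl _
  | tail _ hstep ih =>
    obtain ⟨t, _, _, hlt⟩ := hstep
    omega

lemma one_ble (w : W) : ble cs 1 w := by
  generalize hn : ℓ w = n
  induction n using Nat.strong_induction_on generalizing w with
  | _ n ih =>
    rcases eq_or_ne w 1 with rfl | hw
    · exact Relation.ReflTransGen.refl
    · obtain ⟨i, hi⟩ := cs.exists_rightDescent_of_ne_one hw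
      have hlt : ℓ (w * s i) < n := hn ▸ hi
      refine (ih _ hlt _ rfl).tail ⟨s i, cs.isReflection_simple i, ?_, ?_⟩
      · exact (cs.simple_mul_simple_cancel_right i).symm
      · rw [hn]; exact hlt

lemma lift_step_up {a b : W} (i : B) (hab : bstep cs a b)
    (ha : ℓ a < ℓ (a * s i)) (hb : ℓ b < ℓ (b * s i)) : bstep cs (a * s i) (b * s i) := by
  obtain ⟨t, ht, rfl, hlt⟩ := hab
  refine ⟨(s i)⁻¹ * t * s i, ?_, by group, ?_⟩
  · have := ht.conj (s i)⁻¹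
    rwa [inv_inv] at this
  · have h1 : ℓ (a * s i) = ℓ a + 1 := by
      rcases cs.length_mul_simple a i with h | h <;> omega
    have h2 : ℓ (a * t * s i) = ℓ (a * t) + 1 := by
      rcases cs.length_mul_simple (a * t) i with h | h <;> omega
    omega

lemma lift_step_down {a b : W} (i : B) (hab : bstep cs a b)
    (ha : ℓ a < ℓ (a * s i)) (hb : ℓ (b * s i) < ℓ b) : ble cs (a * s i) b := by
  obtain ⟨t, ht, rfl, hlt⟩ := hab
  have hbt : (a * t) * t = a := by rw [mul_assoc, ht.mul_self, mul_one]
  have hnu : nu cs (a * t) t = 1 := by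
    rw [nu_eq_one_iff cs ht, hbt]; exact hlt
  obtain ⟨τ, hτred, hτ⟩ := cs.exists_reduced_word' ((a * t) * s i)
  have hω : π (τ ++ [i]) = a * t := by
    rw [cs.wordProd_append, cs.wordProd_singleton, ← hτ, cs.simple_mul_simple_cancel_right]
  have hτlen : ℓ ((a * t) * s i) = τ.length := by rw [hτ]; exact hτred
  have hωred : cs.IsReduced (τ ++ [i]) := by
    unfold CoxeterSystem.IsReduced
    rw [hω, List.length_append, List.length_singleton]
    have hd := (cs.isRightDescent_iff (w := a * t) (i := i)).mp hb
    omega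
  have hnuω : nu cs (π (τ ++ [i])) t = 1 := by rw [hω]; exact hnu
  obtain ⟨j, hj, hgd⟩ := nu_wordProd_exists cs _ _ hnuω
  have hkey := cs.wordProd_mul_getD_rightInvSeq (τ ++ [i]) j
  rw [hgd, hω, hbt] at hkey
  rcases lt_or_ge j τ.length with hjτ | hjτ
  · rw [List.eraseIdx_append_of_lt_length hjτ] at hkey
    have ha2 : a * s i = π (τ.eraseIdx j) := by
      rw [hkey, cs.wordProd_append, cs.wordProd_singleton,
        cs.simple_mul_simple_cancel_right]
    have hkey2 := cs.wordProd_mul_getD_rightInvSeq τ j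
    have ht'' : cs.IsReflection ((cs.rightInvSeq τ).getD j 1) := by
      apply cs.isReflection_of_mem_rightInvSeq
      rw [List.getD_eq_getElem _ _ (by rw [cs.length_rightInvSeq]; omega)]
      exact List.getElem_mem _
    have hstep1 : bstep cs (a * s i) (π τ) := by
      refine ⟨(cs.rightInvSeq τ).getD j 1, ht'', ?_, ?_⟩
      · rw [ha2, ← hkey2, mul_assoc, cs.getD_rightInvSeq_mul_self, mul_one]
      · have h1 : ℓ (a * s i) ≤ (τ.eraseIdx j).length := by
          rw [ha2]; exact cs.length_wordProd_le _
        have h2 : (τ.eraseIdx j).length + 1 = τ.length :=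
          List.length_eraseIdx_add_one hjτ
        have h3 : ℓ (π τ) = τ.length := hτred
        omega
    have hstep2 : bstep cs (π τ) (a * t) := by
      refine ⟨s i, cs.isReflection_simple i, ?_, ?_⟩
      · rw [← hτ, cs.simple_mul_simple_cancel_right]
      · have h3 : ℓ (π τ) = τ.length := hτred
        omega
    exact (Relation.ReflTransGen.single hstep1).tail hstep2
  · rw [List.eraseIdx_append_of_length_le hjτ] at hkey
    have hj0 : j - τ.length = 0 := by
      rw [List.length_append, List.length_singleton] at hj
      omega
    rw [hj0] at hkey
    simp only [List.eraseIdx_zero, List.tail_cons, List.append_nil] at hkey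
    have h5 : a = a * t * s i := by conv_lhs => rw [hkey, ← hτ]
    have h6 : a * s i = a * t := by
      calc a * s i = (a * t * s i) * s i := by rw [← h5]
        _ = a * t := cs.simple_mul_simple_cancel_right i
    rw [h6]
    exact Relation.ReflTransGen.refl

lemma lift_down {w : W} (i : B) (hw : ℓ (w * s i) < ℓ w) :
    ∀ x, ble cs x w → ℓ x < ℓ (x * s i) → ble cs (x * s i) w := by
  intro x hxw
  induction hxw using Relation.ReflTransGen.head_induction_on with
  | refl => intro hx; omega
  | @head a c hstep hrest ih =>
    intro ha
    by_cases hc : ℓ (c * s i) < ℓ c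
    · exact (lift_step_down cs i hstep ha hc).trans hrest
    · have hc' : ℓ c < ℓ (c * s i) := by
        have hne := cs.length_mul_simple_ne c i
        omega
      exact (Relation.ReflTransGen.single (lift_step_up cs i hstep ha hc')).trans (ih hc')

lemma ble_of_all_rightDescent {w : W} (hw : ∀ i, ℓ (w * s i) < ℓ w) (u : W) : ble cs u w := by
  generalize hn : ℓ u = n
  induction n using Nat.strong_induction_on generalizing u with
  | _ n ih =>
    rcases eq_or_ne u 1 with rfl | hu
    · exact one_ble cs w
    · obtain ⟨i, hi⟩ := cs.exists_rightDescent_of_ne_one hu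
      have hlt : ℓ (u * s i) < n := hn ▸ hi
      have hble := ih _ hlt (u * s i) rfl
      have hasc : ℓ (u * s i) < ℓ (u * s i * s i) := by
        rw [cs.simple_mul_simple_cancel_right]
        omega
      have := lift_down cs i (hw i) (u * s i) hble hasc
      rwa [cs.simple_mul_simple_cancel_right] at this

lemma exists_length_gt [Finite B] (hW : Infinite W) (n : ℕ) : ∃ u : W, n < ℓ u := by
  by_contra h
  push_neg at h
  have hfin : (Set.univ : Set W).Finite := by
    apply Set.Finite.subset ((List.finite_length_le B n).image cs.wordProd)
    intro w _
    obtain ⟨ω, hlen, hw⟩ := cs.exists_reduced_word w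
    exact ⟨ω, by rw [Set.mem_setOf_eq, ← hlen.eq, ← hw]; exact h w, hw.symm⟩
  exact Set.infinite_univ hfin

/-- In an infinite Coxeter group, no element has every simple reflection as a left descent. -/
lemma exists_not_leftDescent [Finite B] (hW : Infinite W) (w : W) :
    ∃ i, ¬ ℓ (s i * w) < ℓ w := by
  by_contra h
  push_neg at h
  have hrd : ∀ i, ℓ (w⁻¹ * s i) < ℓ w⁻¹ := fun i =>
    (cs.isRightDescent_inv_iff).mpr (h i)
  obtain ⟨u, hu⟩ := exists_length_gt cs hW (ℓ w⁻¹)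
  have := ble_length_le cs (ble_of_all_rightDescent cs hrd u)
  omega

end SteinbergAux

open SteinbergAux in
/-- Coefficient form of Steinberg's identity `∑_{I ⊆ S} (-1)^{|I|} W(t)/W_I(t) = 0` for an
infinite Coxeter group `W` with finite generating set `S`: for every `k`, the signed sum over
all subsets `I ⊆ S` of the number of elements of length `k` having no left descent in `I`
vanishes. -/
theorem stmt_3 {B : Type*} [Fintype B] (M : CoxeterMatrix B)
    (hW : Infinite M.Group) (k : ℕ) :
    ∑ I : Finset B, (-1 : ℤ) ^ I.card *
      (Nat.card {w : M.Group // M.toCoxeterSystem.length w = k ∧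
        ∀ i ∈ I, ¬ M.toCoxeterSystem.length (M.toCoxeterSystem.simple i * w) <
          M.toCoxeterSystem.length w} : ℤ) = 0 := by
  classical
  set cs := M.toCoxeterSystem with hcs
  have hfin : {w : M.Group | cs.length w = k}.Finite := by
    apply Set.Finite.subset ((List.finite_length_le B k).image cs.wordProd)
    intro w hw
    obtain ⟨ω, hlen, hw'⟩ := cs.exists_reduced_word w
    refine ⟨ω, ?_, hw'.symm⟩
    rw [Set.mem_setOf_eq, ← hlen.eq, ← hw']
    exact le_of_eq hw
  set Lk : Finset M.Group := hfin.toFinset with hLk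
  have hmem : ∀ w : M.Group, w ∈ Lk ↔ cs.length w = k := by
    intro w; rw [hLk, Set.Finite.mem_toFinset, Set.mem_setOf_eq]
  have hcard : ∀ I : Finset B,
      Nat.card {w : M.Group // cs.length w = k ∧
          ∀ i ∈ I, ¬ cs.length (cs.simple i * w) < cs.length w}
        = (Lk.filter (fun w => ∀ i ∈ I,
            ¬ cs.length (cs.simple i * w) < cs.length w)).card := by
    intro I
    rw [← Set.ncard_coe_finset, ← Nat.card_coe_set_eq]
    apply Nat.card_congr
    apply Equiv.subtypeEquivRight
    intro w
    rw [Finset.coe_filter, Set.mem_setOf_eq, hmem w]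
  calc ∑ I : Finset B, (-1 : ℤ) ^ I.card *
      (Nat.card {w : M.Group // cs.length w = k ∧
        ∀ i ∈ I, ¬ cs.length (cs.simple i * w) < cs.length w} : ℤ)
      = ∑ I : Finset B, ∑ w ∈ Lk, (-1 : ℤ) ^ I.card *
          (if ∀ i ∈ I, ¬ cs.length (cs.simple i * w) < cs.length w then 1 else 0) := by
        apply Finset.sum_congr rfl
        intro I _
        rw [hcard I, Finset.card_filter, ← Finset.mul_sum]
        push_cast
        rfl
    _ = ∑ w ∈ Lk, ∑ I : Finset B, (-1 : ℤ) ^ I.card *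
          (if ∀ i ∈ I, ¬ cs.length (cs.simple i * w) < cs.length w then 1 else 0) :=
        Finset.sum_comm
    _ = 0 := by
        apply Finset.sum_eq_zero
        intro w _
        set Dc : Finset B :=
          Finset.univ.filter (fun i => ¬ cs.length (cs.simple i * w) < cs.length w) with hDc
        have hiff : ∀ I : Finset B,
            (∀ i ∈ I, ¬ cs.length (cs.simple i * w) < cs.length w) ↔ I ⊆ Dc := by
          intro I
          constructor
          · intro h i hi
            rw [hDc, Finset.mem_filter]
            exact ⟨Finset.mem_univ i, h i hi⟩
          · intro h i hi
            have := h hi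
            rw [hDc, Finset.mem_filter] at this
            exact this.2
        have hne : Dc.Nonempty := by
          obtain ⟨i, hi⟩ := exists_not_leftDescent cs hW w
          exact ⟨i, by rw [hDc, Finset.mem_filter]; exact ⟨Finset.mem_univ i, hi⟩⟩
        calc ∑ I : Finset B, (-1 : ℤ) ^ I.card *
            (if ∀ i ∈ I, ¬ cs.length (cs.simple i * w) < cs.length w then 1 else 0)
            = ∑ I : Finset B, (if I ⊆ Dc then (-1 : ℤ) ^ I.card else 0) := by
              apply Finset.sum_congr rfl
              intro I _
              rw [mul_ite, mul_one, mul_zero]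
              congr 1
              simp only [eq_iff_iff]
              exact hiff I
          _ = ∑ I ∈ Finset.univ.filter (fun I : Finset B => I ⊆ Dc), (-1 : ℤ) ^ I.card := by
              rw [Finset.sum_filter]
          _ = ∑ I ∈ Dc.powerset, (-1 : ℤ) ^ I.card := by
              apply Finset.sum_congr _ (fun _ _ => rfl)
              ext J
              simp [Finset.mem_powerset]
          _ = 0 := Finset.sum_powerset_neg_one_pow_card_of_nonempty hne
end

section
/- Let M be the Coxeter matrix on the set {1, 2, 3, 4} with M(1,2) = M(2,3) = M(3,4) = ∞ (encoded as 0) and M(1,3) = M(1,4) = M(2,4) = 2. Then the Poincaré series W(t) = ∑_{k≥0} c_k t^k of the Coxeter group W(M) satisfies (1 − 2t) · W(t) = (1+t)² in ℤ⟦t⟧. -/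
open PowerSeries

/-- The Coxeter matrix on {1, …, 4} with M(1,2) = M(2,3) = M(3,4) = ∞ (encoded as 0) and M(1,3) = M(1,4) = M(2,4) = 2. -/
def cox16 : CoxeterMatrix (Fin 4) where
  M := !![1,0,2,2; 0,1,0,2; 2,0,1,0; 2,2,0,1]
  off_diagonal := by
    intro i i' h
    fin_cases i <;> fin_cases i' <;> simp_all

/-- The Poincaré series `W(t) = ∑ₖ cₖ tᵏ` of the Coxeter group of `cox16`, where `cₖ` is the
number of elements of length `k`. -/
noncomputable def poincare16 : PowerSeries ℤ :=
  PowerSeries.mk fun k =>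
    (Nat.card {w : cox16.Group // cox16.toCoxeterSystem.length w = k} : ℤ)

namespace Cox16

abbrev B := Fin 4

/-- commuting relation -/
def cm (i j : B) : Prop := cox16.M i j = 2

instance : DecidableRel cm := fun _ _ => inferInstanceAs (Decidable (_ = _))

/-- allowed adjacent pairs in normal-form words -/
def ok (x y : B) : Prop := x ≠ y ∧ (cm x y → x < y)

instance : DecidableRel ok := fun _ _ => inferInstanceAs (Decidable (_ ∧ _))

/-- normal-form language -/
def L (ξ : List B) : Prop := List.Chain' ok ξ

lemma L_nil : L [] := List.isChain_nil

lemma L_singleton (i : B) : L [i] := List.isChain_singleton i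

lemma L_cons' {x : B} {t : List B} :
    L (x :: t) ↔ (∀ y ∈ t.head?, ok x y) ∧ L t := List.isChain_cons

/-- left-multiplication by generator `i` on normal forms -/
def σ (i : B) : List B → List B
  | [] => [i]
  | x :: t => if x = i then t else if cm i x ∧ x < i then x :: σ i t else i :: x :: t

lemma σ_nil (i : B) : σ i [] = [i] := rfl

lemma σ_cancel {i x : B} (t : List B) (h : x = i) : σ i (x :: t) = t := by
  simp [σ, h]

lemma σ_pass {i x : B} (t : List B) (h1 : x ≠ i) (h2 : cm i x ∧ x < i) :
    σ i (x :: t) = x :: σ i t := by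
  simp [σ, h1, h2]

lemma σ_put {i x : B} (t : List B) (h1 : x ≠ i) (h2 : ¬(cm i x ∧ x < i)) :
    σ i (x :: t) = i :: x :: t := by
  simp [σ, h1, h2]

lemma head_σ (i : B) (ξ : List B) :
    (σ i ξ).head? = some i ∨ (σ i ξ).head? = ξ.head? ∨ ∃ t, ξ = i :: t ∧ σ i ξ = t := by
  cases ξ with
  | nil => left; rw [σ_nil]; rfl
  | cons x t =>
    by_cases h1 : x = i
    · right; right; exact ⟨t, by rw [h1], σ_cancel t h1⟩
    · by_cases h2 : cm i x ∧ x < i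
      · right; left; rw [σ_pass t h1 h2]; rfl
      · left; rw [σ_put t h1 h2]; rfl

lemma F1 : ∀ i x z : B, cm i x → x < i → ok i z → ok x z := by decide
lemma F2 : ∀ i x : B, cm i x → x < i → ok x i := by decide
lemma F3 : ∀ i x : B, ok i x → ¬(x = i) ∧ ¬(cm i x ∧ x < i) := by decide
lemma F4 : ∀ i x : B, x ≠ i → ¬(cm i x ∧ x < i) → ok i x := by decide

lemma chain_σ (i : B) : ∀ ξ, L ξ → L (σ i ξ) := by
  intro ξ
  induction ξ with
  | nil => intro _; exact L_singleton i
  | cons x t ih =>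
    intro hL
    rw [L_cons'] at hL
    obtain ⟨hhead, htail⟩ := hL
    by_cases h1 : x = i
    · rw [σ_cancel t h1]; exact htail
    · by_cases h2 : cm i x ∧ x < i
      · rw [σ_pass t h1 h2, L_cons']
        refine ⟨?_, ih htail⟩
        intro z hz
        rcases head_σ i t with h | h | ⟨t', rfl, he⟩
        · rw [h] at hz; obtain rfl := Option.some_injective _ hz
          exact F2 i x h2.1 h2.2
        · rw [h] at hz; exact hhead z hz
        · rw [he] at hz
          rw [L_cons'] at htail
          exact F1 i x z h2.1 h2.2 (htail.1 z hz)
      · rw [σ_put t h1 h2, L_cons']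
        exact ⟨fun z hz => by simp at hz; subst hz; exact F4 i x h1 h2,
          L_cons'.mpr ⟨hhead, htail⟩⟩

lemma prep (i : B) (ξ : List B) (h : L (i :: ξ)) : σ i ξ = i :: ξ := by
  cases ξ with
  | nil => rfl
  | cons x t =>
    have hx : ok i x := (L_cons'.mp h).1 x rfl
    obtain ⟨h1, h2⟩ := F3 i x hx
    exact σ_put t h1 h2

lemma invol (i : B) : ∀ ξ, L ξ → σ i (σ i ξ) = ξ := by
  intro ξ
  induction ξ with
  | nil => intro _; rw [σ_nil, σ_cancel [] rfl]
  | cons x t ih =>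
    intro hL
    by_cases h1 : x = i
    · subst h1
      rw [σ_cancel t rfl]
      exact prep x t hL
    · rw [L_cons'] at hL
      by_cases h2 : cm i x ∧ x < i
      · rw [σ_pass t h1 h2, σ_pass (σ i t) h1 h2, ih hL.2]
      · rw [σ_put t h1 h2, σ_cancel (x :: t) rfl]

lemma comm_σ (i j : B) (hji : cm j i) (hlt : i < j)
    (hnr : ∀ x, ¬(cm i x ∧ x < i)) (hok : ∀ h, ok j h → ok i h) :
    ∀ ξ, L ξ → σ i (σ j ξ) = σ j (σ i ξ) := by
  have hij : i ≠ j := hlt.ne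
  intro ξ hL
  cases ξ with
  | nil =>
    rw [σ_nil, σ_nil, σ_put [] hij.symm (hnr j), σ_pass [] hij ⟨hji, hlt⟩, σ_nil]
  | cons x t =>
    by_cases h1 : x = i
    · subst h1
      rw [σ_pass t hij ⟨hji, hlt⟩, σ_cancel (σ j t) rfl, σ_cancel t rfl]
    · by_cases h2 : x = j
      · subst h2
        rw [σ_cancel t rfl, σ_put t h1 (hnr x),
          σ_pass (x :: t) hij ⟨hji, hlt⟩, σ_cancel t rfl]
        apply prep
        rw [L_cons'] at hL ⊢
        exact ⟨fun z hz => hok z (hL.1 z hz), hL.2⟩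
      · rw [σ_put t h1 (hnr x), σ_pass (x :: t) hij ⟨hji, hlt⟩]
        by_cases h3 : cm j x ∧ x < j
        · rw [σ_pass t h2 h3, σ_put (σ j t) h1 (hnr x)]
        · rw [σ_put t h2 h3, σ_put (x :: t) hij.symm (hnr j)]

lemma len_σ (i : B) : ∀ ξ : List B, (σ i ξ).length ≤ ξ.length + 1 := by
  intro ξ
  induction ξ with
  | nil => simp [σ_nil]
  | cons x t ih =>
    by_cases h1 : x = i
    · rw [σ_cancel t h1]; simp; omega
    · by_cases h2 : cm i x ∧ x < i
      · rw [σ_pass t h1 h2]; simpa using ih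
      · rw [σ_put t h1 h2]; simp



noncomputable section

abbrev W := cox16.Group

abbrev cs : CoxeterSystem cox16 W := cox16.toCoxeterSystem

local prefix:100 "π" => cs.wordProd
local prefix:100 "sp" => cs.simple

lemma comm_simple {i x : B} (h : cm i x) : sp i * sp x = sp x * sp i := by
  have hp := cs.simple_mul_simple_pow i x
  rw [show cox16.M i x = 2 from h, pow_two] at hp
  calc sp i * sp x = (sp i * sp x)⁻¹ := (inv_eq_of_mul_eq_one_right hp).symm
    _ = sp x * sp i := by rw [mul_inv_rev, cs.inv_simple, cs.inv_simple]

lemma prod_σ (i : B) : ∀ ξ : List B, π (σ i ξ) = sp i * π ξ := by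
  intro ξ
  induction ξ with
  | nil =>
    rw [σ_nil, cs.wordProd_singleton, cs.wordProd_nil, mul_one]
  | cons x t ih =>
    by_cases h1 : x = i
    · subst h1
      rw [σ_cancel t rfl, cs.wordProd_cons, cs.simple_mul_simple_cancel_left]
    · by_cases h2 : cm i x ∧ x < i
      · rw [σ_pass t h1 h2, cs.wordProd_cons, ih, cs.wordProd_cons, ← mul_assoc,
          ← comm_simple h2.1, mul_assoc]
      · rw [σ_put t h1 h2, cs.wordProd_cons, cs.wordProd_cons]

abbrev X := {ξ : List B // L ξ}

def Eσ (i : B) : Equiv.Perm X :=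
  Function.Involutive.toPerm (fun p => ⟨σ i p.1, chain_σ i p.1 p.2⟩)
    (fun p => Subtype.ext (invol i p.1 p.2))

lemma perm_ext {f g : Equiv.Perm X} (h : ∀ p : X, (f p).1 = (g p).1) : f = g :=
  Equiv.ext fun p => Subtype.ext (h p)

@[simp] lemma Eσ_apply (i : B) (p : X) : (Eσ i p).1 = σ i p.1 := rfl

lemma sq_one {i j : B} (h : ∀ ξ, L ξ → σ i (σ j ξ) = σ j (σ i ξ)) :
    (Eσ i * Eσ j) ^ 2 = 1 := by
  apply perm_ext
  intro p
  have hp2 : L (σ j p.1) := chain_σ j p.1 p.2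
  show (((Eσ i * Eσ j) ^ 2) p : X).1 = p.1
  rw [pow_two]
  simp only [Equiv.Perm.mul_apply, Eσ_apply]
  rw [← h (σ j p.1) hp2, invol j p.1 p.2, invol i p.1 p.2]

lemma comm_all : ∀ i j : B, cox16.M i j = 2 → ∀ ξ, L ξ → σ i (σ j ξ) = σ j (σ i ξ) := by
  have h02 := comm_σ 0 2 (by decide) (by decide) (by decide) (by decide)
  have h03 := comm_σ 0 3 (by decide) (by decide) (by decide) (by decide)
  have h13 := comm_σ 1 3 (by decide) (by decide) (by decide) (by decide)
  intro i j hM ξ hξ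
  fin_cases i <;> fin_cases j <;>
    first
      | exact h02 ξ hξ
      | exact (h02 ξ hξ).symm
      | exact h03 ξ hξ
      | exact (h03 ξ hξ).symm
      | exact h13 ξ hξ
      | exact (h13 ξ hξ).symm
      | rfl
      | (exfalso; revert hM; decide)

lemma M_cases : ∀ i j : B, i ≠ j → cox16.M i j = 0 ∨ cox16.M i j = 2 := by
  intro i j h; fin_cases i <;> fin_cases j <;> simp_all [cox16]

lemma liftable : cox16.IsLiftable (fun i => Eσ i) := by
  intro i j
  rcases eq_or_ne i j with rfl | hne
  · rw [cox16.diagonal i, pow_one]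
    apply perm_ext
    intro p
    simp only [Equiv.Perm.mul_apply, Eσ_apply]
    exact invol i p.1 p.2
  · rcases M_cases i j hne with h0 | h2
    · rw [h0, pow_zero]
    · rw [h2]
      exact sq_one (comm_all i j h2)

def φ : W →* Equiv.Perm X := cs.lift ⟨fun i => Eσ i, liftable⟩

def emptyX : X := ⟨[], L_nil⟩

def nf (w : W) : List B := (φ w emptyX).1

lemma nf_L (w : W) : L (nf w) := (φ w emptyX).2

lemma φ_simple (i : B) : φ (sp i) = Eσ i := CoxeterSystem.lift_apply_simple cs liftable i

lemma pi_phi : ∀ (ω : List B) (p : X), π ((φ (π ω) p).1) = π ω * π p.1 := by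
  intro ω
  induction ω with
  | nil => intro p; simp [φ]
  | cons i ω ih =>
    intro p
    rw [cs.wordProd_cons, map_mul, Equiv.Perm.mul_apply, φ_simple, Eσ_apply, prod_σ,
      ih p, mul_assoc]

lemma pi_nf (w : W) : π (nf w) = w := by
  obtain ⟨ω, rfl⟩ := cs.wordProd_surjective w
  have := pi_phi ω emptyX
  simpa [nf, emptyX] using this

lemma nf_of_L : ∀ ω : List B, L ω → nf (π ω) = ω := by
  intro ω
  induction ω with
  | nil => intro _; simp [nf, φ, emptyX]
  | cons i ω ih =>
    intro h
    have hω : L ω := (L_cons'.mp h).2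
    rw [nf, cs.wordProd_cons, map_mul, Equiv.Perm.mul_apply, φ_simple, Eσ_apply]
    rw [show ((φ (π ω)) emptyX).1 = nf (π ω) from rfl, ih hω]
    exact prep i ω h

lemma len_phi : ∀ (ω : List B) (p : X), ((φ (π ω) p).1).length ≤ ω.length + p.1.length := by
  intro ω
  induction ω with
  | nil => intro p; simp [φ]
  | cons i ω ih =>
    intro p
    rw [cs.wordProd_cons, map_mul, Equiv.Perm.mul_apply, φ_simple, Eσ_apply]
    calc (σ i ((φ (π ω)) p).1).length ≤ ((φ (π ω)) p).1.length + 1 := len_σ i _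
      _ ≤ ω.length + p.1.length + 1 := by have := ih p; omega
      _ ≤ (i :: ω).length + p.1.length := by simp

lemma len_nf_le (w : W) : (nf w).length ≤ cs.length w := by
  obtain ⟨ω, hlen, rfl⟩ := cs.exists_reduced_word w
  calc (nf (π ω)).length ≤ ω.length + ([] : List B).length := len_phi ω emptyX
    _ = cs.length (π ω) := by simp; exact (show cs.length (π ω) = ω.length from hlen).symm

lemma len_pi (ω : List B) (h : L ω) : cs.length (π ω) = ω.length := by
  refine le_antisymm (cs.length_wordProd_le ω) ?_
  calc ω.length = (nf (π ω)).length := by rw [nf_of_L ω h]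
    _ ≤ cs.length (π ω) := len_nf_le _

def equivLk (k : ℕ) : {w : W // cs.length w = k} ≃ {ξ : List B // L ξ ∧ ξ.length = k} where
  toFun w := ⟨nf w.1, nf_L w.1, by
    have h1 : (nf w.1).length ≤ cs.length w.1 := len_nf_le w.1
    have h2 : cs.length (π (nf w.1)) ≤ (nf w.1).length := cs.length_wordProd_le _
    rw [pi_nf w.1] at h2
    have h3 := w.2
    omega⟩
  invFun ξ := ⟨π ξ.1, by rw [len_pi ξ.1 ξ.2.1, ξ.2.2]⟩
  left_inv w := Subtype.ext (pi_nf w.1)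
  right_inv ξ := Subtype.ext (nf_of_L ξ.1 ξ.2.1)

/-! ### Counting normal forms -/

def okh (x : B) : List B → Prop
  | [] => True
  | y :: _ => ok x y

instance (x : B) : DecidablePred (okh x) := fun t =>
  match t with
  | [] => inferInstanceAs (Decidable True)
  | y :: _ => inferInstanceAs (Decidable (ok x y))

lemma L_cons'' {x : B} {t : List B} : L (x :: t) ↔ okh x t ∧ L t := by
  rw [L_cons']
  cases t with
  | nil => simp [okh, L_nil]
  | cons y t' => simp [okh]

def WF : ℕ → Finset (List B)
  | 0 => {[]}
  | k + 1 => Finset.univ.biUnion fun x : B => ((WF k).filter (okh x)).image (x :: ·)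

lemma mem_WF : ∀ k ξ, ξ ∈ WF k ↔ (L ξ ∧ ξ.length = k) := by
  intro k
  induction k with
  | zero =>
    intro ξ
    simp only [WF, Finset.mem_singleton]
    constructor
    · rintro rfl; exact ⟨L_nil, rfl⟩
    · rintro ⟨_, h⟩; exact List.length_eq_zero_iff.mp h
  | succ k ih =>
    intro ξ
    simp only [WF, Finset.mem_biUnion, Finset.mem_image, Finset.mem_filter, Finset.mem_univ,
      true_and]
    constructor
    · rintro ⟨x, a, ⟨ha, hok⟩, rfl⟩
      obtain ⟨hL, hlen⟩ := (ih a).mp ha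
      exact ⟨L_cons''.mpr ⟨hok, hL⟩, by simp [hlen]⟩
    · rintro ⟨hL, hlen⟩
      cases ξ with
      | nil => simp at hlen
      | cons x a =>
        obtain ⟨hok, hLa⟩ := L_cons''.mp hL
        exact ⟨x, a, ⟨(ih a).mpr ⟨hLa, by simpa using hlen⟩, hok⟩, rfl⟩

lemma card_eq (k : ℕ) :
    Nat.card {w : W // cs.length w = k} = (WF k).card := by
  have e : {w : W // cs.length w = k} ≃ {ξ : List B // ξ ∈ WF k} :=
    (equivLk k).trans (Equiv.subtypeEquivRight fun ξ => (mem_WF k ξ).symm)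
  rw [Nat.card_congr e, Nat.card_eq_finsetCard]

/-- number of normal forms of length `k` with first letter `x` -/
def hv (k : ℕ) (x : B) : ℕ := ((WF k).filter (fun t => t.headI = x)).card

lemma filter_headI (k : ℕ) (x : B) :
    (WF (k+1)).filter (fun t => t.headI = x) = ((WF k).filter (okh x)).image (x :: ·) := by
  ext t
  simp only [Finset.mem_filter, Finset.mem_image, WF, Finset.mem_biUnion, Finset.mem_univ,
    true_and]
  constructor
  · rintro ⟨⟨y, a, ha, rfl⟩, hh⟩
    simp only [List.headI] at hh
    subst hh
    exact ⟨a, ha, rfl⟩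
  · rintro ⟨a, ha, rfl⟩
    exact ⟨⟨x, a, ha, rfl⟩, rfl⟩

lemma hv_succ_eq (k : ℕ) (x : B) : hv (k+1) x = ((WF k).filter (okh x)).card := by
  rw [hv, filter_headI, Finset.card_image_of_injective _ (fun a b h => by injection h)]

lemma card_WF_succ (k : ℕ) : (WF (k+1)).card = ∑ x : B, hv (k+1) x := by
  rw [show WF (k+1) = Finset.univ.biUnion
    fun x : B => ((WF k).filter (okh x)).image (x :: ·) from rfl]
  rw [Finset.card_biUnion]
  · refine Finset.sum_congr rfl fun x _ => ?_
    rw [hv_succ_eq k x, Finset.card_image_of_injective _ (fun a b h => by injection h)]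
  · intro a _ b _ hab
    simp only [Finset.disjoint_left, Finset.mem_image]
    rintro t ⟨u, _, rfl⟩ ⟨v, _, hv⟩
    exact hab (by injection hv with h1 h2; exact h1.symm)

lemma filter_okh (k : ℕ) (hk : 1 ≤ k) (x : B) :
    (WF k).filter (okh x) =
      (Finset.univ.filter (fun y => ok x y)).biUnion
        (fun y => (WF k).filter (fun t => t.headI = y)) := by
  ext t
  have hne : t ∈ WF k → t ≠ [] := by
    intro ht hnil
    have hlen := ((mem_WF k t).mp ht).2
    subst hnil
    simp at hlen
    omega
  simp only [Finset.mem_filter, Finset.mem_biUnion, Finset.mem_univ, true_and]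
  constructor
  · rintro ⟨ht, hok⟩
    cases t with
    | nil => exact absurd rfl (hne ht)
    | cons y a => exact ⟨y, hok, ht, rfl⟩
  · rintro ⟨y, hxy, ht, hh⟩
    cases t with
    | nil => exact absurd rfl (hne ht)
    | cons z a =>
      simp only [List.headI] at hh
      subst hh
      exact ⟨ht, hxy⟩

lemma hv_rec (k : ℕ) (hk : 1 ≤ k) (x : B) :
    hv (k+1) x = ∑ y ∈ Finset.univ.filter (fun y => ok x y), hv k y := by
  have hd : ∀ a ∈ Finset.univ.filter (fun y => ok x y), ∀ b ∈ Finset.univ.filter (fun y => ok x y),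
      a ≠ b → Disjoint ((WF k).filter (fun t => t.headI = a))
        ((WF k).filter (fun t => t.headI = b)) := by
    intro a _ b _ hab
    simp only [Finset.disjoint_left, Finset.mem_filter]
    rintro t ⟨_, h1⟩ ⟨_, h2⟩
    exact hab (h1 ▸ h2 ▸ rfl)
  rw [hv_succ_eq, filter_okh k hk x, Finset.card_biUnion hd]
  rfl

/-! ### Numeric values -/

lemma hv_two : hv 2 0 = 3 * 2 ^ 0 ∧ hv 2 1 = 3 * 2 ^ 0 ∧ hv 2 2 = 2 * 2 ^ 0 ∧
    hv 2 3 = 2 ^ 0 := by decide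

lemma succs0 : Finset.univ.filter (fun y => ok 0 y) = ({1, 2, 3} : Finset B) := by decide
lemma succs1 : Finset.univ.filter (fun y => ok 1 y) = ({0, 2, 3} : Finset B) := by decide
lemma succs2 : Finset.univ.filter (fun y => ok 2 y) = ({1, 3} : Finset B) := by decide
lemma succs3 : Finset.univ.filter (fun y => ok 3 y) = ({2} : Finset B) := by decide

lemma hv_invariant : ∀ m : ℕ, hv (m+2) 0 = 3 * 2 ^ m ∧ hv (m+2) 1 = 3 * 2 ^ m ∧
    hv (m+2) 2 = 2 * 2 ^ m ∧ hv (m+2) 3 = 2 ^ m := by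
  intro m
  induction m with
  | zero => exact hv_two
  | succ m ih =>
    obtain ⟨h0, h1, h2, h3⟩ := ih
    have e0 := hv_rec (m+2) (by omega) 0
    have e1 := hv_rec (m+2) (by omega) 1
    have e2 := hv_rec (m+2) (by omega) 2
    have e3 := hv_rec (m+2) (by omega) 3
    rw [succs0] at e0; rw [succs1] at e1; rw [succs2] at e2; rw [succs3] at e3
    rw [Finset.sum_insert (by decide), Finset.sum_insert (by decide),
      Finset.sum_singleton] at e0
    rw [Finset.sum_insert (by decide), Finset.sum_insert (by decide),
      Finset.sum_singleton] at e1
    rw [Finset.sum_insert (by decide), Finset.sum_singleton] at e2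
    rw [Finset.sum_singleton] at e3
    rw [h1, h2, h3] at e0
    rw [h0, h2, h3] at e1
    rw [h1, h3] at e2
    rw [h2] at e3
    have hmm : m + 1 + 2 = m + 2 + 1 := by omega
    refine ⟨?_, ?_, ?_, ?_⟩ <;> rw [hmm, pow_succ]
    · rw [e0]; ring
    · rw [e1]; ring
    · rw [e2]; ring
    · rw [e3]; ring

lemma card_WF_two_add (m : ℕ) : (WF (m+2)).card = 9 * 2 ^ m := by
  obtain ⟨h0, h1, h2, h3⟩ := hv_invariant m
  rw [show m + 2 = (m + 1) + 1 from rfl, card_WF_succ, Fin.sum_univ_four]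
  rw [show (m+1)+1 = m+2 from rfl] at *
  rw [h0, h1, h2, h3]
  ring

lemma card_WF_zero : (WF 0).card = 1 := by decide
lemma card_WF_one : (WF 1).card = 4 := by decide
lemma card_WF_double (m : ℕ) : (WF (m+3)).card = 2 * (WF (m+2)).card := by
  rw [show m + 3 = (m+1) + 2 from by omega, card_WF_two_add, card_WF_two_add, pow_succ]
  ring

end

end Cox16

theorem stmt_16 :
    (1 - 2 * X) * poincare16 =
      (1 + X) ^ 2 := by
  classical
  have hP : poincare16 = PowerSeries.mk fun k => ((Cox16.WF k).card : ℤ) := by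
    apply PowerSeries.ext
    intro n
    simp only [poincare16, PowerSeries.coeff_mk]
    rw [show Nat.card {w : cox16.Group // cox16.toCoxeterSystem.length w = n}
      = (Cox16.WF n).card from Cox16.card_eq n]
  rw [hP]
  set P := PowerSeries.mk fun k => ((Cox16.WF k).card : ℤ) with hPdef
  have expand : (1 - 2 * X) * P = P - (X * P + X * P) := by ring
  have rhs : ((1 + X)^2 : PowerSeries ℤ) = 1 + (X + X ^ 2) + X := by ring
  rw [expand, rhs]
  ext n
  simp only [map_sub, map_add]
  match n with
  | 0 =>
    simp only [hPdef, PowerSeries.coeff_mk, PowerSeries.coeff_one, PowerSeries.coeff_X,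
      PowerSeries.coeff_X_pow, PowerSeries.coeff_zero_X_mul]
    norm_num [Cox16.card_WF_zero]
  | 1 =>
    simp only [hPdef, PowerSeries.coeff_mk, PowerSeries.coeff_one, PowerSeries.coeff_X,
      PowerSeries.coeff_X_pow, PowerSeries.coeff_succ_X_mul]
    norm_num [Cox16.card_WF_zero, Cox16.card_WF_one]
  | 2 =>
    simp only [hPdef, PowerSeries.coeff_mk, PowerSeries.coeff_one, PowerSeries.coeff_X,
      PowerSeries.coeff_X_pow, PowerSeries.coeff_succ_X_mul]
    norm_num [Cox16.card_WF_one, show (Cox16.WF 2).card = 9 from Cox16.card_WF_two_add 0]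
  | (n+3) =>
    simp only [hPdef, PowerSeries.coeff_mk, PowerSeries.coeff_one, PowerSeries.coeff_X,
      PowerSeries.coeff_X_pow, PowerSeries.coeff_succ_X_mul, Cox16.card_WF_double n]
    push_cast
    ring
end

section
/- Let M be the Coxeter matrix on the set {1, 2, 3, 4} with M(i,j) = 3 for all i ≠ j. Then the Poincaré series W(t) = ∑_{k≥0} c_k t^k of the Coxeter group W(M) satisfies (1 − 2t − 2t² + 3t³) · W(t) = (1+t)(1+t+t²) in ℤ⟦t⟧. -/
open PowerSeries

/-- The Coxeter matrix on {1, …, 4} with all off-diagonal entries 3. -/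
def cox18 : CoxeterMatrix (Fin 4) where
  M := !![1,3,3,3; 3,1,3,3; 3,3,1,3; 3,3,3,1]
  off_diagonal := by
    intro i i' h
    fin_cases i <;> fin_cases i' <;> simp_all

/-- The Poincaré series `W(t) = ∑ₖ cₖ tᵏ` of the Coxeter group of `cox18`, where `cₖ` is the
number of elements of length `k`. -/
noncomputable def poincare18 : PowerSeries ℤ :=
  PowerSeries.mk fun k =>
    (Nat.card {w : cox18.Group // cox18.toCoxeterSystem.length w = k} : ℤ)

abbrev Wg := cox18.Group
noncomputable abbrev cs : CoxeterSystem cox18 Wg := cox18.toCoxeterSystem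

local prefix:100 "ℓ" => cs.length
local prefix:100 "σ" => cs.simple
local prefix:100 "π" => cs.wordProd

/-- The geometric representation matrices (w.r.t. the form with B(eᵢ,eⱼ) = -1, B(eᵢ,eᵢ)=2,
scaled to be integral): `Amat i` sends `e i ↦ -e i` and `e j ↦ e j + e i`. -/
def Amat : Fin 4 → Matrix (Fin 4) (Fin 4) ℤ := fun i =>
  Matrix.of fun r c => if c = i then (if r = i then -1 else 0) else (if r = c ∨ r = i then 1 else 0)

/-- Basis vectors. -/
def ev : Fin 4 → (Fin 4 → ℤ) := fun i r => if r = i then 1 else 0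

lemma liftable : cox18.IsLiftable Amat := by
  show ∀ i j, (Amat i * Amat j) ^ cox18.M i j = 1
  decide

noncomputable def ρ : Wg →* Matrix (Fin 4) (Fin 4) ℤ := cs.lift ⟨Amat, liftable⟩

lemma ρ_simple (i : Fin 4) : ρ (σ i) = Amat i := cs.lift_apply_simple liftable i

lemma M_offdiag : ∀ i j : Fin 4, i ≠ j → cox18.M i j = 3 := by
  intro i j h
  fin_cases i <;> fin_cases j <;> simp_all [cox18]

lemma braid {i j : Fin 4} (hij : i ≠ j) : σ i * σ j * σ i = σ j * σ i * σ j := by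
  have h : (σ i * σ j) ^ 3 = 1 := M_offdiag i j hij ▸ cs.simple_mul_simple_pow i j
  have e : (σ i * σ j) ^ 3 = σ i * σ j * σ i * σ j * σ i * σ j := by
    rw [pow_succ, pow_succ, pow_one]; simp only [mul_assoc]
  have h6 : σ i * σ j * σ i * σ j * σ i * σ j = 1 := by rw [← e]; exact h
  have h5 : σ i * σ j * σ i * σ j * σ i = σ j := by
    have : σ i * σ j * σ i * σ j * σ i * σ j * σ j = 1 * σ j := by rw [h6]
    rwa [cs.simple_mul_simple_cancel_right, one_mul] at this
  have h4 : σ i * σ j * σ i * σ j = σ j * σ i := by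
    have : σ i * σ j * σ i * σ j * σ i * σ i = σ j * σ i := by rw [h5]
    rwa [cs.simple_mul_simple_cancel_right] at this
  have : σ i * σ j * σ i * σ j * σ j = σ j * σ i * σ j := by rw [h4]
  rwa [cs.simple_mul_simple_cancel_right] at this

/-- ρ(w) has the invertible-matrix property we need: mulVec is injective. -/
lemma rho_mulVec_inj (w : Wg) {v : Fin 4 → ℤ} (h : (ρ w).mulVec v = 0) : v = 0 := by
  have h1 : ρ w⁻¹ * ρ w = 1 := by rw [← map_mul, inv_mul_cancel, map_one]
  calc v = (1 : Matrix (Fin 4) (Fin 4) ℤ).mulVec v := by rw [Matrix.one_mulVec]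
    _ = (ρ w⁻¹).mulVec ((ρ w).mulVec v) := by rw [Matrix.mulVec_mulVec, h1]
    _ = 0 := by rw [h, Matrix.mulVec_zero]

lemma mulVec_simple (w : Wg) (i : Fin 4) (v : Fin 4 → ℤ) :
    (ρ (w * σ i)).mulVec v = (ρ w).mulVec ((Amat i).mulVec v) := by
  rw [map_mul, ρ_simple, ← Matrix.mulVec_mulVec]

/-- Strip descents in `{i,j}` from the right of `w`. -/
lemma strip (i j : Fin 4) (w : Wg) : ∃ (v : Wg) (ω : List (Fin 4)),
    (∀ x ∈ ω, x = i ∨ x = j) ∧ w = v * π ω ∧ ℓ w = ℓ v + ω.length ∧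
    ¬ cs.IsRightDescent v i ∧ ¬ cs.IsRightDescent v j := by
  obtain ⟨n, hn⟩ : ∃ n, ℓ w = n := ⟨_, rfl⟩
  induction n using Nat.strong_induction_on generalizing w with
  | _ n IH =>
  by_cases hi : cs.IsRightDescent w i
  · have hl : ℓ (w * σ i) + 1 = ℓ w := cs.isRightDescent_iff.mp hi
    obtain ⟨v, ω, h1, h2, h3, h4, h5⟩ := IH (ℓ (w * σ i)) (by omega) (w * σ i) rfl
    refine ⟨v, ω ++ [i], ?_, ?_, ?_, h4, h5⟩
    · intro x hx
      rcases List.mem_append.mp hx with hx | hx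
      · exact h1 x hx
      · left; simpa using hx
    · rw [cs.wordProd_append, cs.wordProd_singleton, ← mul_assoc, ← h2,
        cs.simple_mul_simple_cancel_right]
    · simp only [List.length_append, List.length_singleton]; omega
  · by_cases hj : cs.IsRightDescent w j
    · have hl : ℓ (w * σ j) + 1 = ℓ w := cs.isRightDescent_iff.mp hj
      obtain ⟨v, ω, h1, h2, h3, h4, h5⟩ := IH (ℓ (w * σ j)) (by omega) (w * σ j) rfl
      refine ⟨v, ω ++ [j], ?_, ?_, ?_, h4, h5⟩
      · intro x hx
        rcases List.mem_append.mp hx with hx | hx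
        · exact h1 x hx
        · right; simpa using hx
      · rw [cs.wordProd_append, cs.wordProd_singleton, ← mul_assoc, ← h2,
          cs.simple_mul_simple_cancel_right]
      · simp only [List.length_append, List.length_singleton]; omega
    · exact ⟨w, [], by simp, by simp, by simp, hi, hj⟩

/-- The six elements of the dihedral subgroup generated by `σ i, σ j`. -/
noncomputable def el (i j : Fin 4) (d : Fin 6) : Wg :=
  match d with
  | ⟨0, _⟩ => 1
  | ⟨1, _⟩ => σ i
  | ⟨2, _⟩ => σ j
  | ⟨3, _⟩ => σ i * σ j
  | ⟨4, _⟩ => σ j * σ i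
  | ⟨5, _⟩ => σ i * σ j * σ i

/-- Lengths of the six elements. -/
def lam (d : Fin 6) : ℕ :=
  match d with
  | ⟨0, _⟩ => 0 | ⟨1, _⟩ => 1 | ⟨2, _⟩ => 1 | ⟨3, _⟩ => 2 | ⟨4, _⟩ => 2 | ⟨5, _⟩ => 3

/-- Right multiplication by `σ i` permutes the six elements: (01)(24)(35). -/
def permI (d : Fin 6) : Fin 6 :=
  match d with
  | ⟨0, _⟩ => 1 | ⟨1, _⟩ => 0 | ⟨2, _⟩ => 4 | ⟨3, _⟩ => 5 | ⟨4, _⟩ => 2 | ⟨5, _⟩ => 3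

/-- Right multiplication by `σ j` permutes the six elements: (02)(13)(45). -/
def permJ (d : Fin 6) : Fin 6 :=
  match d with
  | ⟨0, _⟩ => 2 | ⟨1, _⟩ => 3 | ⟨2, _⟩ => 0 | ⟨3, _⟩ => 1 | ⟨4, _⟩ => 5 | ⟨5, _⟩ => 4

lemma el_mul_i (i j : Fin 4) (d : Fin 6) : el i j d * σ i = el i j (permI d) := by
  fin_cases d
  · exact one_mul _
  · exact cs.simple_mul_simple_self i
  · rfl
  · show σ i * σ j * σ i = σ i * σ j * σ i; rfl
  · show σ j * σ i * σ i = σ j; rw [mul_assoc, cs.simple_mul_simple_self, mul_one]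
  · show σ i * σ j * σ i * σ i = σ i * σ j
    rw [mul_assoc, cs.simple_mul_simple_self, mul_one]

lemma el_mul_j {i j : Fin 4} (hij : i ≠ j) (d : Fin 6) : el i j d * σ j = el i j (permJ d) := by
  fin_cases d
  · exact one_mul _
  · rfl
  · exact cs.simple_mul_simple_self j
  · show σ i * σ j * σ j = σ i; rw [mul_assoc, cs.simple_mul_simple_self, mul_one]
  · show σ j * σ i * σ j = σ i * σ j * σ i; exact (braid hij).symm
  · show σ i * σ j * σ i * σ j = σ j * σ i
    rw [braid hij, mul_assoc, cs.simple_mul_simple_self, mul_one]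

/-- Every product of letters in `{i,j}` is one of the six elements. -/
lemma six_closed {i j : Fin 4} (hij : i ≠ j) (ω : List (Fin 4))
    (hω : ∀ x ∈ ω, x = i ∨ x = j) : ∃ d : Fin 6, π ω = el i j d := by
  induction ω using List.reverseRecOn with
  | nil => exact ⟨⟨0, by omega⟩, by simp [el]⟩
  | append_singleton ω x IH =>
    obtain ⟨d, hd⟩ := IH (fun y hy => hω y (List.mem_append_left _ hy))
    rcases hω x (by simp) with rfl | rfl
    · exact ⟨permI d, by rw [cs.wordProd_append, cs.wordProd_singleton, hd, el_mul_i]⟩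
    · exact ⟨permJ d, by rw [cs.wordProd_append, cs.wordProd_singleton, hd, el_mul_j hij]⟩
-- decide facts about the representation
lemma amat_mul_ne_one : ∀ i j : Fin 4, i ≠ j → Amat i * Amat j ≠ 1 := by decide
lemma amat_iji_ne : ∀ i j u : Fin 4, i ≠ j → Amat i * Amat j * Amat i ≠ Amat u := by decide
lemma amat_j_evi : ∀ i j : Fin 4, i ≠ j → (Amat j).mulVec (ev i) = ev i + ev j := by decide
lemma amat_ij_evi : ∀ i j : Fin 4, i ≠ j → (Amat i * Amat j).mulVec (ev i) = ev j := by decide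
lemma amat_i_evi : ∀ i : Fin 4, (Amat i).mulVec (ev i) = -(ev i) := by decide
lemma ev_nonneg' : ∀ i r : Fin 4, 0 ≤ ev i r := by decide
lemma ev_nonneg (i : Fin 4) : 0 ≤ ev i := fun r => ev_nonneg' i r
lemma ev_ne_zero : ∀ i : Fin 4, ev i ≠ 0 := by decide

lemma length_simple_mul_simple {i j : Fin 4} (hij : i ≠ j) : ℓ (σ i * σ j) = 2 := by
  have l1 : ℓ (σ i) = 1 := cs.length_simple i
  have l2 : ℓ (σ j) = 1 := cs.length_simple j
  have hle : ℓ (σ i * σ j) ≤ 2 := by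
    have := cs.length_mul_le (σ i) (σ j); omega
  have hpar : ℓ (σ i * σ j) % 2 = 0 := by
    rw [cs.length_mul_mod_two]; omega
  have hne : ℓ (σ i * σ j) ≠ 0 := by
    intro h0
    have h1 : σ i * σ j = 1 := cs.length_eq_zero_iff.mp h0
    apply amat_mul_ne_one i j hij
    rw [← ρ_simple, ← ρ_simple, ← map_mul, h1, map_one]
  omega

lemma length_iji {i j : Fin 4} (hij : i ≠ j) : ℓ (σ i * σ j * σ i) = 3 := by
  have l1 : ℓ (σ i) = 1 := cs.length_simple i
  have l2 : ℓ (σ i * σ j) = 2 := length_simple_mul_simple hij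
  have hle : ℓ (σ i * σ j * σ i) ≤ 3 := by
    have h1 := cs.length_mul_le (σ i * σ j) (σ i); omega
  have hpar : ℓ (σ i * σ j * σ i) % 2 = 1 := by
    rw [cs.length_mul_mod_two]; omega
  have hne : ℓ (σ i * σ j * σ i) ≠ 1 := by
    intro h1
    obtain ⟨u, hu⟩ := cs.length_eq_one_iff.mp h1
    apply amat_iji_ne i j u hij
    rw [← ρ_simple i, ← ρ_simple j, ← ρ_simple u, ← map_mul, ← map_mul, hu]
  omega

lemma length_el {i j : Fin 4} (hij : i ≠ j) (d : Fin 6) : ℓ (el i j d) = lam d := by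
  fin_cases d
  · exact cs.length_one
  · exact cs.length_simple i
  · exact cs.length_simple j
  · exact length_simple_mul_simple hij
  · exact length_simple_mul_simple hij.symm
  · exact length_iji hij

/-- KEY (Humphreys 5.4): if `i` is not a right descent of `w` then the `i`-th column of
`ρ w` is nonnegative. -/
theorem key : ∀ (n : ℕ) (w : Wg) (i : Fin 4), ℓ w = n → ¬ cs.IsRightDescent w i →
    0 ≤ (ρ w).mulVec (ev i) := by
  intro n
  induction n using Nat.strong_induction_on with
  | _ n IH =>
  intro w i hn hnd
  by_cases hw : w = 1
  · subst hw
    rw [map_one, Matrix.one_mulVec]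
    exact ev_nonneg i
  · obtain ⟨j, hj⟩ := cs.exists_rightDescent_of_ne_one hw
    have hij : i ≠ j := fun h => hnd (h ▸ hj)
    obtain ⟨v, ω, hmem, hw_eq, hlen, hvi, hvj⟩ := strip i j w
    have hωne : ω ≠ [] := by
      rintro rfl
      simp only [cs.wordProd_nil, mul_one] at hw_eq
      exact hvj (hw_eq ▸ hj)
    obtain ⟨d, hd⟩ := six_closed hij ω hmem
    have hl1 : ℓ (el i j d) = lam d := length_el hij d
    have h3 : lam d ≤ ω.length := by
      rw [← hl1, ← hd]; exact cs.length_wordProd_le ω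
    have h2 : ℓ w ≤ ℓ v + lam d := by
      rw [hw_eq, hd, ← hl1]; exact cs.length_mul_le v _
    have hlen' : ω.length = lam d := by omega
    have hasc : ℓ (w * σ i) = ℓ w + 1 := cs.not_isRightDescent_iff.mp hnd
    have hw_eq2 : w = v * el i j d := by rw [hw_eq, hd]
    have h4 : ℓ (w * σ i) ≤ ℓ v + lam (permI d) := by
      rw [hw_eq2, mul_assoc, el_mul_i, ← length_el hij (permI d)]
      exact cs.length_mul_le v _
    have h5 : lam d + 1 ≤ lam (permI d) := by omega
    have h6 : 1 ≤ lam d := by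
      rw [← hlen']
      exact List.length_pos_iff.mpr hωne
    have h7 : 1 ≤ n := by omega
    have hvlt : ℓ v < n := by omega
    have pvi : 0 ≤ (ρ v).mulVec (ev i) := IH (ℓ v) (by omega) v i rfl hvi
    have pvj : 0 ≤ (ρ v).mulVec (ev j) := IH (ℓ v) (by omega) v j rfl hvj
    fin_cases d
    · simp [lam] at h6
    · simp [lam, permI] at h5
    · -- d = 2 : el = σ j
      have : (ρ w).mulVec (ev i) = (ρ v).mulVec (ev i + ev j) := by
        rw [hw_eq2]
        show (ρ (v * σ j)).mulVec (ev i) = _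
        rw [mulVec_simple, amat_j_evi i j hij]
      rw [this, Matrix.mulVec_add]
      exact add_nonneg pvi pvj
    · -- d = 3 : el = σ i * σ j
      have : (ρ w).mulVec (ev i) = (ρ v).mulVec (ev j) := by
        rw [hw_eq2]
        show (ρ (v * (σ i * σ j))).mulVec (ev i) = _
        rw [map_mul, map_mul, ρ_simple, ρ_simple, ← Matrix.mulVec_mulVec,
          amat_ij_evi i j hij]
      rw [this]
      exact pvj
    · simp [lam, permI] at h5
    · simp [lam, permI] at h5

lemma not_desc_iff_pos (w : Wg) (i : Fin 4) :
    ¬ cs.IsRightDescent w i ↔ 0 ≤ (ρ w).mulVec (ev i) := by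
  constructor
  · exact key (ℓ w) w i rfl
  · intro h0
    by_contra hdesc
    have hnd : ¬ cs.IsRightDescent (w * σ i) i :=
      cs.isRightDescent_iff_not_isRightDescent_mul.mp hdesc
    have h1 : 0 ≤ (ρ (w * σ i)).mulVec (ev i) := key _ _ _ rfl hnd
    rw [mulVec_simple, amat_i_evi, Matrix.mulVec_neg] at h1
    have h2 : (ρ w).mulVec (ev i) = 0 := le_antisymm (by simpa using neg_nonneg.mp h1) h0
    exact ev_ne_zero i (rho_mulVec_inj w h2)

lemma desc_iff_nonpos (w : Wg) (i : Fin 4) :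
    cs.IsRightDescent w i ↔ (ρ w).mulVec (ev i) ≤ 0 := by
  constructor
  · intro hdesc
    have hnd : ¬ cs.IsRightDescent (w * σ i) i :=
      cs.isRightDescent_iff_not_isRightDescent_mul.mp hdesc
    have h1 : 0 ≤ (ρ (w * σ i)).mulVec (ev i) := key _ _ _ rfl hnd
    rw [mulVec_simple, amat_i_evi, Matrix.mulVec_neg] at h1
    simpa using neg_nonneg.mp h1
  · intro h0
    by_contra hnd
    have h1 : (ρ w).mulVec (ev i) = 0 :=
      le_antisymm h0 ((not_desc_iff_pos w i).mp hnd)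
    exact ev_ne_zero i (rho_mulVec_inj w h1)

/-- Integer combination of three basis vectors. -/
def cmb (a b c : Fin 4) (p q r : ℤ) : Fin 4 → ℤ :=
  fun x => p * ev a x + q * ev b x + r * ev c x

lemma cmb_eq_smul (a b c : Fin 4) (p q r : ℤ) :
    cmb a b c p q r = p • ev a + q • ev b + r • ev c := by
  funext x
  simp [cmb, Pi.smul_apply, smul_eq_mul]

lemma mulVec_cmb (M : Matrix (Fin 4) (Fin 4) ℤ) (a b c : Fin 4) (p q r : ℤ) :
    M.mulVec (cmb a b c p q r) =
      p • M.mulVec (ev a) + q • M.mulVec (ev b) + r • M.mulVec (ev c) := by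
  rw [cmb_eq_smul, Matrix.mulVec_add, Matrix.mulVec_add, Matrix.mulVec_smul,
    Matrix.mulVec_smul, Matrix.mulVec_smul]

lemma smul_cmb_add (a b c : Fin 4) (p q r x1 x2 x3 y1 y2 y3 z1 z2 z3 : ℤ) :
    p • cmb a b c x1 x2 x3 + q • cmb a b c y1 y2 y3 + r • cmb a b c z1 z2 z3 =
      cmb a b c (p*x1+q*y1+r*z1) (p*x2+q*y2+r*z2) (p*x3+q*y3+r*z3) := by
  funext x
  simp only [Pi.add_apply, Pi.smul_apply, smul_eq_mul, cmb]
  ring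

section NoThree

variable {a b c : Fin 4} (hab : a ≠ b) (hac : a ≠ c) (hbc : b ≠ c)

/-- decide facts: the six prefix roots of the word `abcabc` and the column action of the
full product. -/
lemma prefix_roots : ∀ a b c : Fin 4, a ≠ b → a ≠ c → b ≠ c →
    (ev a = cmb a b c 1 0 0) ∧
    ((Amat a).mulVec (ev b) = cmb a b c 1 1 0) ∧
    ((Amat a * Amat b).mulVec (ev c) = cmb a b c 2 1 1) ∧
    ((Amat a * Amat b * Amat c).mulVec (ev a) = cmb a b c 2 2 1) ∧
    ((Amat a * Amat b * Amat c * Amat a).mulVec (ev b) = cmb a b c 3 2 2) ∧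
    ((Amat a * Amat b * Amat c * Amat a * Amat b).mulVec (ev c) = cmb a b c 3 3 2) ∧
    ((Amat a * Amat b * Amat c * Amat a * Amat b * Amat c).mulVec (ev a) = cmb a b c 4 3 3) ∧
    ((Amat a * Amat b * Amat c * Amat a * Amat b * Amat c).mulVec (ev b) = cmb a b c 0 1 0) ∧
    ((Amat a * Amat b * Amat c * Amat a * Amat b * Amat c).mulVec (ev c) =
      cmb a b c (-3) (-3) (-2)) := by
  decide

include hab hac hbc in
/-- Power columns of the translation matrix. -/
lemma t6_pow_cols (m : ℕ) :
    ((Amat a * Amat b * Amat c * Amat a * Amat b * Amat c) ^ m).mulVec (ev a)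
        = cmb a b c (1+3*m) (3*m) (3*m) ∧
      ((Amat a * Amat b * Amat c * Amat a * Amat b * Amat c) ^ m).mulVec (ev b)
        = cmb a b c 0 1 0 ∧
      ((Amat a * Amat b * Amat c * Amat a * Amat b * Amat c) ^ m).mulVec (ev c)
        = cmb a b c (-(3*m)) (-(3*m)) (1-3*m) := by
  obtain ⟨r0, r1, r2, r3, r4, r5, ca, cb, cc⟩ := prefix_roots a b c hab hac hbc
  induction m with
  | zero =>
    refine ⟨?_, ?_, ?_⟩ <;> rw [pow_zero, Matrix.one_mulVec] <;> funext x <;>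
      simp [cmb, ev] <;> ring_nf <;> simp [mul_comm]
  | succ m IH =>
    obtain ⟨IHa, IHb, IHc⟩ := IH
    have peel : ∀ v : Fin 4 → ℤ,
        ((Amat a * Amat b * Amat c * Amat a * Amat b * Amat c) ^ (m+1)).mulVec v =
        ((Amat a * Amat b * Amat c * Amat a * Amat b * Amat c) ^ m).mulVec
          ((Amat a * Amat b * Amat c * Amat a * Amat b * Amat c).mulVec v) := by
      intro v
      rw [pow_succ, ← Matrix.mulVec_mulVec]
    refine ⟨?_, ?_, ?_⟩
    · rw [peel, ca, mulVec_cmb, IHa, IHb, IHc, smul_cmb_add]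
      congr 1 <;> push_cast <;> ring
    · rw [peel, cb, mulVec_cmb, IHa, IHb, IHc, smul_cmb_add]
      congr 1 <;> push_cast <;> ring
    · rw [peel, cc, mulVec_cmb, IHa, IHb, IHc, smul_cmb_add]
      congr 1 <;> push_cast <;> ring

include hab hac hbc in
theorem no_three_descents (w : Wg) (ha : cs.IsRightDescent w a) (hb : cs.IsRightDescent w b)
    (hc : cs.IsRightDescent w c) : False := by
  have Ha : (ρ w).mulVec (ev a) ≤ 0 := (desc_iff_nonpos w a).mp ha
  have Hb : (ρ w).mulVec (ev b) ≤ 0 := (desc_iff_nonpos w b).mp hb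
  have Hc : (ρ w).mulVec (ev c) ≤ 0 := (desc_iff_nonpos w c).mp hc
  have descHelper : ∀ (x : Wg) (l : Fin 4) (p q r : ℤ), 0 ≤ p → 0 ≤ q → 0 ≤ r →
      (ρ x).mulVec (ev l) = (ρ w).mulVec (cmb a b c p q r) → cs.IsRightDescent x l := by
    intro x l p q r hp hq hr heq
    rw [desc_iff_nonpos, heq, mulVec_cmb]
    intro y
    have h1 := Ha y
    have h2 := Hb y
    have h3 := Hc y
    simp only [Pi.add_apply, Pi.smul_apply, smul_eq_mul, Pi.zero_apply] at h1 h2 h3 ⊢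
    nlinarith
  set t6 : Wg := σ a * σ b * σ c * σ a * σ b * σ c with ht6
  have rt6 : ρ t6 = Amat a * Amat b * Amat c * Amat a * Amat b * Amat c := by
    rw [ht6]
    simp only [map_mul, ρ_simple]
  obtain ⟨r0, r1, r2, r3, r4, r5, _, _, _⟩ := prefix_roots a b c hab hac hbc
  have walk : ∀ m : ℕ, ℓ (w * t6 ^ m) + 6*m = ℓ w := by
    intro m
    induction m with
    | zero => simp
    | succ m IH =>
      obtain ⟨Ca, Cb, Cc⟩ := t6_pow_cols hab hac hbc (m := m)
      set x0 := w * t6 ^ m with hx0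
      have powm : ∀ (v : Fin 4 → ℤ) (P : Matrix (Fin 4) (Fin 4) ℤ),
          (ρ x0 * P).mulVec v =
            (ρ w).mulVec (((Amat a * Amat b * Amat c * Amat a * Amat b * Amat c) ^ m).mulVec
              (P.mulVec v)) := by
        intro v P
        rw [← Matrix.mulVec_mulVec, hx0, map_mul, map_pow, rt6, ← Matrix.mulVec_mulVec]
      have t6m_root : ∀ p q r : ℤ,
          ((Amat a * Amat b * Amat c * Amat a * Amat b * Amat c) ^ m).mulVec
            (cmb a b c p q r) = cmb a b c (p+3*m*(p-r)) (q+3*m*(p-r)) (r+3*m*(p-r)) := by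
        intro p q r
        rw [mulVec_cmb, Ca, Cb, Cc, smul_cmb_add]
        congr 1 <;> push_cast <;> ring
      have step : ∀ (y : Wg) (P : Matrix (Fin 4) (Fin 4) ℤ) (l : Fin 4) (p q r : ℤ),
          ρ y = ρ x0 * P → P.mulVec (ev l) = cmb a b c p q r →
          0 ≤ r → 0 ≤ q → r ≤ p → cs.IsRightDescent y l := by
        intro y P l p q r hy hP hr hq hrp
        apply descHelper y l (p+3*m*(p-r)) (q+3*m*(p-r)) (r+3*m*(p-r))
        · nlinarith [Int.ofNat_nonneg m]
        · nlinarith [Int.ofNat_nonneg m]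
        · nlinarith [Int.ofNat_nonneg m]
        · rw [hy, powm, hP, t6m_root]
      have d0 : cs.IsRightDescent x0 a := by
        refine step x0 1 a 1 0 0 (by rw [mul_one]) ?_ (by norm_num) (by norm_num) (by norm_num)
        rw [Matrix.one_mulVec]; exact r0
      have d1 : cs.IsRightDescent (x0 * σ a) b :=
        step _ (Amat a) b 1 1 0 (by simp only [map_mul, ρ_simple, mul_assoc]) r1
          (by norm_num) (by norm_num) (by norm_num)
      have d2 : cs.IsRightDescent (x0 * σ a * σ b) c :=
        step _ (Amat a * Amat b) c 2 1 1 (by simp only [map_mul, ρ_simple, mul_assoc]) r2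
          (by norm_num) (by norm_num) (by norm_num)
      have d3 : cs.IsRightDescent (x0 * σ a * σ b * σ c) a :=
        step _ (Amat a * Amat b * Amat c) a 2 2 1 (by simp only [map_mul, ρ_simple, mul_assoc])
          r3 (by norm_num) (by norm_num) (by norm_num)
      have d4 : cs.IsRightDescent (x0 * σ a * σ b * σ c * σ a) b :=
        step _ (Amat a * Amat b * Amat c * Amat a) b 3 2 2
          (by simp only [map_mul, ρ_simple, mul_assoc]) r4 (by norm_num) (by norm_num)
          (by norm_num)
      have d5 : cs.IsRightDescent (x0 * σ a * σ b * σ c * σ a * σ b) c :=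
        step _ (Amat a * Amat b * Amat c * Amat a * Amat b) c 3 3 2
          (by simp only [map_mul, ρ_simple, mul_assoc]) r5 (by norm_num) (by norm_num)
          (by norm_num)
      have e0 : ℓ (x0 * σ a) + 1 = ℓ x0 := cs.isRightDescent_iff.mp d0
      have e1 : ℓ (x0 * σ a * σ b) + 1 = ℓ (x0 * σ a) := cs.isRightDescent_iff.mp d1
      have e2 : ℓ (x0 * σ a * σ b * σ c) + 1 = ℓ (x0 * σ a * σ b) := cs.isRightDescent_iff.mp d2
      have e3 : ℓ (x0 * σ a * σ b * σ c * σ a) + 1 = ℓ (x0 * σ a * σ b * σ c) :=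
        cs.isRightDescent_iff.mp d3
      have e4 : ℓ (x0 * σ a * σ b * σ c * σ a * σ b) + 1 = ℓ (x0 * σ a * σ b * σ c * σ a) :=
        cs.isRightDescent_iff.mp d4
      have e5 : ℓ (x0 * σ a * σ b * σ c * σ a * σ b * σ c) + 1 =
          ℓ (x0 * σ a * σ b * σ c * σ a * σ b) := cs.isRightDescent_iff.mp d5
      have hx6 : x0 * σ a * σ b * σ c * σ a * σ b * σ c = w * t6 ^ (m+1) := by
        rw [hx0, pow_succ, ht6]
        simp only [mul_assoc]
      rw [hx6] at e5
      omega
  have := walk (ℓ w + 1)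
  omega

end NoThree

section Counting
open scoped Classical

open Classical in
/-- Elements of a fixed length form a finite set. -/
lemma finite_length_set (k : ℕ) : {w : Wg | ℓ w = k}.Finite := by
  apply Set.Finite.subset (Set.Finite.image (fun ω => π ω) (List.finite_length_eq (Fin 4) k))
  intro w hw
  obtain ⟨ω, hlen, hword⟩ := cs.exists_reduced_word w
  exact ⟨ω, by simp only [Set.mem_setOf_eq]; have h' : ℓ (π ω) = ω.length := hlen; rw [← h', ← hword]; exact hw, hword.symm⟩

instance finite_length_subtype (k : ℕ) (P : Wg → Prop) : Finite {w : Wg // ℓ w = k ∧ P w} := by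
  have h1 : Finite {w : Wg // ℓ w = k} := (finite_length_set k).to_subtype
  apply Finite.of_injective (fun w => (⟨w.1, w.2.1⟩ : {w : Wg // ℓ w = k}))
  intro u v huv
  simp only [Subtype.mk.injEq] at huv
  exact Subtype.ext huv

instance finite_length_subtype' (k : ℕ) : Finite {w : Wg // ℓ w = k} :=
  (finite_length_set k).to_subtype

instance finite_length_shift (k t : ℕ) (P : Wg → Prop) : Finite {w : Wg // ℓ w + t = k ∧ P w} := by
  apply Finite.of_injective
    (fun w => (⟨w.1, ⟨by have := w.2.1; omega, w.2.2⟩⟩ : {w : Wg // ℓ w = k - t ∧ P w}))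
  intro u v huv
  simp only [Subtype.mk.injEq] at huv
  exact Subtype.ext huv

/-- `c k`: the number of elements of length `k`. -/
noncomputable def cnt (k : ℕ) : ℕ := Nat.card {w : Wg // ℓ w = k}

/-- count of length-`k` elements without descent at `i`. -/
noncomputable def acnt (i : Fin 4) (k : ℕ) : ℕ :=
  Nat.card {w : Wg // ℓ w = k ∧ ¬ cs.IsRightDescent w i}

/-- count of length-`k` elements without descents at `i` and `j`. -/
noncomputable def bcnt (i j : Fin 4) (k : ℕ) : ℕ :=
  Nat.card {w : Wg // ℓ w = k ∧ (¬ cs.IsRightDescent w i ∧ ¬ cs.IsRightDescent w j)}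

lemma cnt_zero : cnt 0 = 1 := by
  have : Unique {w : Wg // ℓ w = 0} :=
    { default := ⟨1, cs.length_one⟩
      uniq := fun w => Subtype.ext (cs.length_eq_zero_iff.mp w.2) }
  exact Nat.card_unique

/-- rank-1 decomposition: E2. -/
noncomputable def E2equiv (i : Fin 4) (k : ℕ) :
    {w : Wg // ℓ w = k + 1} ≃
      ({w : Wg // ℓ w = k + 1 ∧ ¬ cs.IsRightDescent w i} ⊕
        {w : Wg // ℓ w = k ∧ ¬ cs.IsRightDescent w i}) where
  toFun w :=
    if h : cs.IsRightDescent w.1 i then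
      Sum.inr ⟨w.1 * σ i, by
        have := cs.isRightDescent_iff.mp h
        exact ⟨by omega, cs.isRightDescent_iff_not_isRightDescent_mul.mp h⟩⟩
    else
      Sum.inl ⟨w.1, w.2, h⟩
  invFun x :=
    match x with
    | Sum.inl w => ⟨w.1, w.2.1⟩
    | Sum.inr u => ⟨u.1 * σ i, by
        have h2 : ℓ (u.1 * σ i) = ℓ u.1 + 1 := cs.not_isRightDescent_iff.mp u.2.2
        omega⟩
  left_inv w := by
    by_cases h : cs.IsRightDescent w.1 i
    · simp only [dif_pos h]
      exact Subtype.ext (cs.simple_mul_simple_cancel_right i)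
    · simp only [dif_neg h]
  right_inv x := by
    match x with
    | Sum.inl w =>
      simp only [dif_neg w.2.2]
    | Sum.inr u =>
      have hdesc : cs.IsRightDescent (u.1 * σ i) i := by
        rw [cs.isRightDescent_iff_not_isRightDescent_mul, cs.simple_mul_simple_cancel_right]
        exact u.2.2
      simp only [dif_pos hdesc]
      congr 1
      exact Subtype.ext (cs.simple_mul_simple_cancel_right i)

lemma E2count (i : Fin 4) (k : ℕ) : cnt (k+1) = acnt i (k+1) + acnt i k := by
  rw [cnt, Nat.card_congr (E2equiv i k), Nat.card_sum]
  rfl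

lemma E2count_zero (i : Fin 4) : cnt 0 = acnt i 0 := by
  apply Nat.card_congr
  apply Equiv.subtypeEquivRight
  intro w
  constructor
  · intro h
    refine ⟨h, ?_⟩
    rw [cs.length_eq_zero_iff.mp h]
    exact cs.not_isRightDescent_one i
  · exact fun h => h.1

end Counting

section Rank2

/-- matrices of the six elements. -/
def melmat (i j : Fin 4) (d : Fin 6) : Matrix (Fin 4) (Fin 4) ℤ :=
  match d with
  | ⟨0, _⟩ => 1
  | ⟨1, _⟩ => Amat i
  | ⟨2, _⟩ => Amat j
  | ⟨3, _⟩ => Amat i * Amat j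
  | ⟨4, _⟩ => Amat j * Amat i
  | ⟨5, _⟩ => Amat i * Amat j * Amat i

lemma melmat_inj : ∀ i j : Fin 4, i ≠ j → ∀ d d' : Fin 6,
    melmat i j d = melmat i j d' → d = d' := by decide

lemma rho_el (i j : Fin 4) (d : Fin 6) : ρ (el i j d) = melmat i j d := by
  fin_cases d
  · show ρ 1 = 1; exact map_one ρ
  · exact ρ_simple i
  · exact ρ_simple j
  · show ρ (σ i * σ j) = Amat i * Amat j
    simp only [map_mul, ρ_simple]
  · show ρ (σ j * σ i) = Amat j * Amat i
    simp only [map_mul, ρ_simple]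
  · show ρ (σ i * σ j * σ i) = Amat i * Amat j * Amat i
    simp only [map_mul, ρ_simple]

lemma el_injective {i j : Fin 4} (hij : i ≠ j) {d d' : Fin 6}
    (h : el i j d = el i j d') : d = d' := by
  apply melmat_inj i j hij
  rw [← rho_el, ← rho_el, h]

/-- inverses of the six elements. -/
def invp (d : Fin 6) : Fin 6 :=
  match d with
  | ⟨0, _⟩ => 0 | ⟨1, _⟩ => 1 | ⟨2, _⟩ => 2 | ⟨3, _⟩ => 4 | ⟨4, _⟩ => 3 | ⟨5, _⟩ => 5

lemma el_inv (i j : Fin 4) (d : Fin 6) : (el i j d)⁻¹ = el i j (invp d) := by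
  fin_cases d
  · show (1 : Wg)⁻¹ = 1; exact inv_one
  · show (σ i)⁻¹ = σ i; exact cs.inv_simple i
  · show (σ j)⁻¹ = σ j; exact cs.inv_simple j
  · show (σ i * σ j)⁻¹ = σ j * σ i
    rw [mul_inv_rev, cs.inv_simple, cs.inv_simple]
  · show (σ j * σ i)⁻¹ = σ i * σ j
    rw [mul_inv_rev, cs.inv_simple, cs.inv_simple]
  · show (σ i * σ j * σ i)⁻¹ = σ i * σ j * σ i
    rw [mul_inv_rev, mul_inv_rev, cs.inv_simple, cs.inv_simple, ← mul_assoc]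

lemma el_mul_el {i j : Fin 4} (hij : i ≠ j) (d d' : Fin 6) :
    ∃ e : Fin 6, el i j d * el i j d' = el i j e := by
  fin_cases d'
  · exact ⟨d, by show el i j d * 1 = el i j d; rw [mul_one]⟩
  · exact ⟨permI d, el_mul_i i j d⟩
  · exact ⟨permJ d, el_mul_j hij d⟩
  · refine ⟨permJ (permI d), ?_⟩
    show el i j d * (σ i * σ j) = _
    rw [← mul_assoc, el_mul_i, el_mul_j hij]
  · refine ⟨permI (permJ d), ?_⟩
    show el i j d * (σ j * σ i) = _
    rw [← mul_assoc, el_mul_j hij, el_mul_i]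
  · refine ⟨permI (permJ (permI d)), ?_⟩
    show el i j d * (σ i * σ j * σ i) = _
    rw [← mul_assoc, ← mul_assoc, el_mul_i, el_mul_j hij, el_mul_i]

lemma perm_lt_five : ∀ d : Fin 6, lam (permI d) < lam d → lam (permJ d) < lam d →
    d = ⟨5, by decide⟩ := by decide

lemma lam_eq_zero : ∀ d : Fin 6, lam d = 0 → d = ⟨0, by omega⟩ := by decide

/-- Length additivity over the rank-2 parabolic decomposition. -/
lemma add_len {i j : Fin 4} (hij : i ≠ j) (v : Wg)
    (hvi : ¬ cs.IsRightDescent v i) (hvj : ¬ cs.IsRightDescent v j) (d : Fin 6) :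
    ℓ (v * el i j d) = ℓ v + lam d := by
  have pvi : 0 ≤ (ρ v).mulVec (ev i) := (not_desc_iff_pos v i).mp hvi
  have pvj : 0 ≤ (ρ v).mulVec (ev j) := (not_desc_iff_pos v j).mp hvj
  have s1 : ℓ (v * σ i) = ℓ v + 1 := cs.not_isRightDescent_iff.mp hvi
  have s2 : ℓ (v * σ j) = ℓ v + 1 := cs.not_isRightDescent_iff.mp hvj
  have nd3 : ¬ cs.IsRightDescent (v * σ i) j := by
    rw [not_desc_iff_pos, mulVec_simple, amat_j_evi j i hij.symm, Matrix.mulVec_add]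
    exact add_nonneg pvj pvi
  have nd4 : ¬ cs.IsRightDescent (v * σ j) i := by
    rw [not_desc_iff_pos, mulVec_simple, amat_j_evi i j hij, Matrix.mulVec_add]
    exact add_nonneg pvi pvj
  have s3 : ℓ (v * σ i * σ j) = ℓ v + 2 := by
    rw [cs.not_isRightDescent_iff.mp nd3, s1]
  have s4 : ℓ (v * σ j * σ i) = ℓ v + 2 := by
    rw [cs.not_isRightDescent_iff.mp nd4, s2]
  have nd5 : ¬ cs.IsRightDescent (v * σ i * σ j) i := by
    rw [not_desc_iff_pos, mulVec_simple, mulVec_simple,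
      Matrix.mulVec_mulVec (ev i) (Amat i) (Amat j), amat_ij_evi i j hij]
    exact pvj
  have s5 : ℓ (v * σ i * σ j * σ i) = ℓ v + 3 := by
    rw [cs.not_isRightDescent_iff.mp nd5, s3]
  fin_cases d
  · show ℓ (v * 1) = ℓ v + 0
    rw [mul_one]; omega
  · exact s1
  · exact s2
  · show ℓ (v * (σ i * σ j)) = ℓ v + 2; rw [← mul_assoc]; exact s3
  · show ℓ (v * (σ j * σ i)) = ℓ v + 2; rw [← mul_assoc]; exact s4
  · show ℓ (v * (σ i * σ j * σ i)) = ℓ v + 3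
    rw [← mul_assoc, ← mul_assoc]; exact s5

/-- The rank-2 parabolic decomposition, as an equivalence. -/
noncomputable def E3equiv {i j : Fin 4} (hij : i ≠ j) (k : ℕ) :
    (Σ d : Fin 6, {v : Wg // ℓ v + lam d = k ∧
      (¬ cs.IsRightDescent v i ∧ ¬ cs.IsRightDescent v j)}) ≃ {w : Wg // ℓ w = k} := by
  apply Equiv.ofBijective
    (fun x => (⟨x.2.1 * el i j x.1, by
      rw [add_len hij x.2.1 x.2.2.2.1 x.2.2.2.2 x.1]; exact x.2.2.1⟩ : {w : Wg // ℓ w = k}))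
  constructor
  · rintro ⟨d, v, hv, hvi, hvj⟩ ⟨d', v', hv', hvi', hvj'⟩ h
    simp only [Subtype.mk.injEq] at h
    obtain ⟨e, he⟩ := el_mul_el hij d (invp d')
    have h1 : v' = v * el i j e := by
      rw [← he, ← mul_assoc, h, mul_assoc, ← el_inv, mul_inv_cancel, mul_one]
    have h2 : v = v' * el i j (invp e) := by
      rw [h1, mul_assoc, ← el_inv, mul_inv_cancel, mul_one]
    have l1 : ℓ v' = ℓ v + lam e := by rw [h1]; exact add_len hij v hvi hvj e
    have l2 : ℓ v = ℓ v' + lam (invp e) := by rw [h2]; exact add_len hij v' hvi' hvj' _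
    have l3 : lam e = 0 := by omega
    have he0 : e = ⟨0, by omega⟩ := lam_eq_zero e l3
    have hv'' : v' = v := by rw [h1, he0]; show v * 1 = v; rw [mul_one]
    subst hv''
    have hd : d = d' := el_injective hij (mul_left_cancel h)
    subst hd
    rfl
  · rintro ⟨w, hw⟩
    obtain ⟨v, ω, hmem, hw_eq, hlen, hvi, hvj⟩ := strip i j w
    obtain ⟨d, hd⟩ := six_closed hij ω hmem
    have hl1 : ℓ (el i j d) = lam d := length_el hij d
    have h3 : lam d ≤ ω.length := by rw [← hl1, ← hd]; exact cs.length_wordProd_le ω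
    have h2 : ℓ w ≤ ℓ v + lam d := by rw [hw_eq, hd, ← hl1]; exact cs.length_mul_le v _
    have hlam : ω.length = lam d := by omega
    refine ⟨⟨d, v, by omega, hvi, hvj⟩, ?_⟩
    apply Subtype.ext
    show v * el i j d = w
    rw [← hd, ← hw_eq]

lemma el5_sq {i j : Fin 4} : el i j ⟨5, by omega⟩ * el i j ⟨5, by omega⟩ = 1 := by
  show (σ i * σ j * σ i) * (σ i * σ j * σ i) = 1
  have e1 : (σ i * σ j * σ i) * (σ i * σ j * σ i) = σ i * σ j * (σ i * σ i) * (σ j * σ i) := by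
    group
  rw [e1, cs.simple_mul_simple_self, mul_one, mul_assoc, cs.simple_mul_simple_cancel_left,
    cs.simple_mul_simple_self]

/-- Classification: if both `i` and `j` are descents, the dihedral part is the longest element. -/
lemma classify {i j : Fin 4} (hij : i ≠ j) (w : Wg)
    (hdi : cs.IsRightDescent w i) (hdj : cs.IsRightDescent w j) :
    ∃ v : Wg, ¬ cs.IsRightDescent v i ∧ ¬ cs.IsRightDescent v j ∧
      w = v * el i j ⟨5, by omega⟩ ∧ ℓ w = ℓ v + 3 := by
  obtain ⟨v, ω, hmem, hw_eq, hlen, hvi, hvj⟩ := strip i j w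
  obtain ⟨d, hd⟩ := six_closed hij ω hmem
  have hw_eq2 : w = v * el i j d := by rw [hw_eq, hd]
  have hl : ℓ w = ℓ v + lam d := by rw [hw_eq2]; exact add_len hij v hvi hvj d
  have hdicalc : ℓ (v * el i j (permI d)) < ℓ (v * el i j d) := by
    have : w * σ i = v * el i j (permI d) := by rw [hw_eq2, mul_assoc, el_mul_i]
    rw [← this, ← hw_eq2]
    exact hdi
  have hdjcalc : ℓ (v * el i j (permJ d)) < ℓ (v * el i j d) := by
    have : w * σ j = v * el i j (permJ d) := by rw [hw_eq2, mul_assoc, el_mul_j hij]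
    rw [← this, ← hw_eq2]
    exact hdj
  rw [add_len hij v hvi hvj, add_len hij v hvi hvj] at hdicalc
  rw [add_len hij v hvi hvj, add_len hij v hvi hvj] at hdjcalc
  have hi2 : lam (permI d) < lam d := by omega
  have hj2 : lam (permJ d) < lam d := by omega
  have hd5 : d = ⟨5, by omega⟩ := perm_lt_five d hi2 hj2
  refine ⟨v, hvi, hvj, by rw [hw_eq2, hd5], by rw [hl, hd5]; rfl⟩

/-- Counting elements with both descents `i, j`. -/
noncomputable def pairEquiv {i j : Fin 4} (hij : i ≠ j) (k : ℕ) :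
    {w : Wg // ℓ w = k ∧ (cs.IsRightDescent w i ∧ cs.IsRightDescent w j)} ≃
      {v : Wg // ℓ v + 3 = k ∧ (¬ cs.IsRightDescent v i ∧ ¬ cs.IsRightDescent v j)} where
  toFun w := ⟨w.1 * el i j ⟨5, by omega⟩, by
    obtain ⟨v, hvi, hvj, heq, hlen⟩ := classify hij w.1 w.2.2.1 w.2.2.2
    have hval : w.1 * el i j ⟨5, by omega⟩ = v := by
      rw [heq, mul_assoc, el5_sq, mul_one]
    rw [hval]
    refine ⟨?_, hvi, hvj⟩
    have := w.2.1
    omega⟩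
  invFun v := ⟨v.1 * el i j ⟨5, by omega⟩, by
    have hlen : ℓ (v.1 * el i j ⟨5, by omega⟩) = ℓ v.1 + 3 :=
      add_len hij v.1 v.2.2.1 v.2.2.2 _
    refine ⟨by have := v.2.1; omega, ?_, ?_⟩
    · show ℓ (v.1 * el i j ⟨5, by omega⟩ * σ i) < ℓ (v.1 * el i j ⟨5, by omega⟩)
      rw [mul_assoc, el_mul_i, hlen, add_len hij v.1 v.2.2.1 v.2.2.2]
      show ℓ v.1 + 2 < ℓ v.1 + 3
      omega
    · show ℓ (v.1 * el i j ⟨5, by omega⟩ * σ j) < ℓ (v.1 * el i j ⟨5, by omega⟩)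
      rw [mul_assoc, el_mul_j hij, hlen, add_len hij v.1 v.2.2.1 v.2.2.2]
      show ℓ v.1 + 2 < ℓ v.1 + 3
      omega⟩
  left_inv w := by
    apply Subtype.ext
    show w.1 * el i j ⟨5, by omega⟩ * el i j ⟨5, by omega⟩ = w.1
    rw [mul_assoc, el5_sq, mul_one]
  right_inv v := by
    apply Subtype.ext
    show v.1 * el i j ⟨5, by omega⟩ * el i j ⟨5, by omega⟩ = v.1
    rw [mul_assoc, el5_sq, mul_one]

end Rank2

section CountIdentities
open scoped Classical

noncomputable local instance fintypeLen (k : ℕ) : Fintype {w : Wg // ℓ w = k} :=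
  Fintype.ofFinite _

lemma nat_card_sigma {α : Type*} [Fintype α] (f : α → Type*) [∀ a, Finite (f a)] :
    Nat.card (Σ a, f a) = ∑ a, Nat.card (f a) := by
  letI := fun a => Fintype.ofFinite (f a)
  simp only [Nat.card_eq_fintype_card]
  exact Fintype.card_sigma

/-- shifting lengths. -/
lemma scard (t k : ℕ) (P : Wg → Prop) :
    Nat.card {v : Wg // ℓ v + t = k ∧ P v} =
      if t ≤ k then Nat.card {v : Wg // ℓ v = k - t ∧ P v} else 0 := by
  split_ifs with h
  · apply Nat.card_congr
    apply Equiv.subtypeEquivRight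
    intro v
    constructor
    · rintro ⟨h1, h2⟩; exact ⟨by omega, h2⟩
    · rintro ⟨h1, h2⟩; exact ⟨by omega, h2⟩
  · have : IsEmpty {v : Wg // ℓ v + t = k ∧ P v} := ⟨fun v => by have := v.2.1; omega⟩
    exact Nat.card_of_isEmpty

lemma E3count {i j : Fin 4} (hij : i ≠ j) (k : ℕ) :
    cnt k = ∑ d : Fin 6, Nat.card {v : Wg // ℓ v + lam d = k ∧
      (¬ cs.IsRightDescent v i ∧ ¬ cs.IsRightDescent v j)} := by
  rw [cnt, ← Nat.card_congr (E3equiv hij k), nat_card_sigma]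

lemma pair_shift {i j : Fin 4} (k : ℕ) :
    Nat.card {w : Wg // ℓ w = k ∧ (i ≠ j ∧ cs.IsRightDescent w i ∧ cs.IsRightDescent w j)} =
      Nat.card {v : Wg // ℓ v + 3 = k ∧
        (i ≠ j ∧ ¬ cs.IsRightDescent v i ∧ ¬ cs.IsRightDescent v j)} := by
  by_cases hij : i = j
  · have h1 : IsEmpty {w : Wg // ℓ w = k ∧
        (i ≠ j ∧ cs.IsRightDescent w i ∧ cs.IsRightDescent w j)} :=
      ⟨fun w => w.2.2.1 hij⟩
    have h2 : IsEmpty {v : Wg // ℓ v + 3 = k ∧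
        (i ≠ j ∧ ¬ cs.IsRightDescent v i ∧ ¬ cs.IsRightDescent v j)} :=
      ⟨fun v => v.2.2.1 hij⟩
    rw [Nat.card_of_isEmpty, Nat.card_of_isEmpty]
  · calc Nat.card {w : Wg // ℓ w = k ∧ (i ≠ j ∧ cs.IsRightDescent w i ∧ cs.IsRightDescent w j)}
        = Nat.card {w : Wg // ℓ w = k ∧ (cs.IsRightDescent w i ∧ cs.IsRightDescent w j)} := by
          apply Nat.card_congr
          apply Equiv.subtypeEquivRight
          intro w
          tauto
      _ = Nat.card {v : Wg // ℓ v + 3 = k ∧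
            (¬ cs.IsRightDescent v i ∧ ¬ cs.IsRightDescent v j)} :=
          Nat.card_congr (pairEquiv hij k)
      _ = Nat.card {v : Wg // ℓ v + 3 = k ∧
            (i ≠ j ∧ ¬ cs.IsRightDescent v i ∧ ¬ cs.IsRightDescent v j)} := by
          apply Nat.card_congr
          apply Equiv.subtypeEquivRight
          intro v
          tauto

/-- pointwise double count of descents. -/
lemma two_mul_dcard (w : Wg) (hw : w ≠ 1) :
    2 * Nat.card {i : Fin 4 // cs.IsRightDescent w i} =
      2 + Nat.card {p : Fin 4 × Fin 4 //
        p.1 ≠ p.2 ∧ cs.IsRightDescent w p.1 ∧ cs.IsRightDescent w p.2} := by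
  set s : Finset (Fin 4) := Finset.univ.filter (cs.IsRightDescent w ·) with hs
  have hD : Nat.card {i : Fin 4 // cs.IsRightDescent w i} = s.card := by
    rw [Nat.card_eq_fintype_card, Fintype.card_subtype]
  have hO : Nat.card {p : Fin 4 × Fin 4 //
      p.1 ≠ p.2 ∧ cs.IsRightDescent w p.1 ∧ cs.IsRightDescent w p.2} = s.offDiag.card := by
    rw [Nat.card_eq_fintype_card, Fintype.card_subtype]
    congr 1
    ext p
    simp only [Finset.mem_filter, Finset.mem_univ, true_and, Finset.mem_offDiag, hs]
    tauto
  have hcard1 : 1 ≤ s.card := by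
    obtain ⟨i, hi⟩ := cs.exists_rightDescent_of_ne_one hw
    apply Finset.card_pos.mpr
    exact ⟨i, by simp [hs, hi]⟩
  have hcard2 : s.card ≤ 2 := by
    by_contra hcon
    obtain ⟨a, b, c, ha, hb, hc, hab, hac, hbc⟩ :=
      (Finset.two_lt_card_iff (s := s)).mp (by omega)
    simp only [hs, Finset.mem_filter, Finset.mem_univ, true_and] at ha hb hc
    exact no_three_descents hab hac hbc w ha hb hc
  rw [hD, hO, Finset.offDiag_card]
  have hc : s.card = 1 ∨ s.card = 2 := by omega
  rcases hc with hc | hc <;> rw [hc] <;> norm_num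

/-- the `(w, i)` pairs with `i` a descent of `w`. -/
noncomputable def PkEquiv1 (k : ℕ) :
    {p : Wg × Fin 4 // ℓ p.1 = k + 1 ∧ cs.IsRightDescent p.1 p.2} ≃
      Σ i : Fin 4, {u : Wg // ℓ u = k ∧ ¬ cs.IsRightDescent u i} where
  toFun p := ⟨p.1.2, ⟨p.1.1 * σ p.1.2, by
    have h1 := cs.isRightDescent_iff.mp p.2.2
    have h2 := p.2.1
    exact ⟨by omega, cs.isRightDescent_iff_not_isRightDescent_mul.mp p.2.2⟩⟩⟩
  invFun x := ⟨(x.2.1 * σ x.1, x.1), by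
    have h1 := cs.not_isRightDescent_iff.mp x.2.2.2
    have h2 := x.2.2.1
    constructor
    · show ℓ (x.2.1 * σ x.1) = k + 1
      omega
    · show cs.IsRightDescent (x.2.1 * σ x.1) x.1
      rw [cs.isRightDescent_iff_not_isRightDescent_mul, cs.simple_mul_simple_cancel_right]
      exact x.2.2.2⟩
  left_inv p := by
    apply Subtype.ext
    show (p.1.1 * σ p.1.2 * σ p.1.2, p.1.2) = p.1
    rw [cs.simple_mul_simple_cancel_right]
  right_inv x := by
    apply Sigma.ext
    · rfl
    · apply heq_of_eq
      apply Subtype.ext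
      show x.2.1 * σ x.1 * σ x.1 = x.2.1
      rw [cs.simple_mul_simple_cancel_right]

noncomputable def PkEquiv2 (k : ℕ) :
    {p : Wg × Fin 4 // ℓ p.1 = k + 1 ∧ cs.IsRightDescent p.1 p.2} ≃
      Σ w : {w : Wg // ℓ w = k + 1}, {i : Fin 4 // cs.IsRightDescent w.1 i} where
  toFun p := ⟨⟨p.1.1, p.2.1⟩, ⟨p.1.2, p.2.2⟩⟩
  invFun x := ⟨(x.1.1, x.2.1), ⟨x.1.2, x.2.2⟩⟩
  left_inv p := rfl
  right_inv x := rfl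

noncomputable def QkEquiv1 (k : ℕ) :
    {q : Wg × (Fin 4 × Fin 4) // ℓ q.1 = k + 1 ∧
      (q.2.1 ≠ q.2.2 ∧ cs.IsRightDescent q.1 q.2.1 ∧ cs.IsRightDescent q.1 q.2.2)} ≃
      Σ w : {w : Wg // ℓ w = k + 1}, {p : Fin 4 × Fin 4 //
        p.1 ≠ p.2 ∧ cs.IsRightDescent w.1 p.1 ∧ cs.IsRightDescent w.1 p.2} where
  toFun q := ⟨⟨q.1.1, q.2.1⟩, ⟨q.1.2, q.2.2⟩⟩
  invFun x := ⟨(x.1.1, x.2.1), ⟨x.1.2, x.2.2⟩⟩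
  left_inv q := rfl
  right_inv x := rfl

noncomputable def QkEquiv2 (k : ℕ) :
    {q : Wg × (Fin 4 × Fin 4) // ℓ q.1 = k + 1 ∧
      (q.2.1 ≠ q.2.2 ∧ cs.IsRightDescent q.1 q.2.1 ∧ cs.IsRightDescent q.1 q.2.2)} ≃
      Σ p : Fin 4 × Fin 4, {w : Wg // ℓ w = k + 1 ∧
        (p.1 ≠ p.2 ∧ cs.IsRightDescent w p.1 ∧ cs.IsRightDescent w p.2)} where
  toFun q := ⟨q.1.2, ⟨q.1.1, q.2⟩⟩
  invFun x := ⟨(x.2.1, x.1), x.2.2⟩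
  left_inv q := rfl
  right_inv x := rfl

lemma E1count (k : ℕ) : 2 * ∑ i : Fin 4, acnt i k =
    2 * cnt (k+1) + ∑ p : Fin 4 × Fin 4, Nat.card {w : Wg // ℓ w = k + 1 ∧
      (p.1 ≠ p.2 ∧ cs.IsRightDescent w p.1 ∧ cs.IsRightDescent w p.2)} := by
  have hPk1 : Nat.card {p : Wg × Fin 4 // ℓ p.1 = k + 1 ∧ cs.IsRightDescent p.1 p.2} =
      ∑ i : Fin 4, acnt i k := by
    rw [Nat.card_congr (PkEquiv1 k), nat_card_sigma]
    rfl
  have hPk2 : Nat.card {p : Wg × Fin 4 // ℓ p.1 = k + 1 ∧ cs.IsRightDescent p.1 p.2} =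
      ∑ w : {w : Wg // ℓ w = k + 1}, Nat.card {i : Fin 4 // cs.IsRightDescent w.1 i} := by
    rw [Nat.card_congr (PkEquiv2 k), nat_card_sigma]
  have hQk1 : Nat.card {q : Wg × (Fin 4 × Fin 4) // ℓ q.1 = k + 1 ∧
      (q.2.1 ≠ q.2.2 ∧ cs.IsRightDescent q.1 q.2.1 ∧ cs.IsRightDescent q.1 q.2.2)} =
      ∑ w : {w : Wg // ℓ w = k + 1}, Nat.card {p : Fin 4 × Fin 4 //
        p.1 ≠ p.2 ∧ cs.IsRightDescent w.1 p.1 ∧ cs.IsRightDescent w.1 p.2} := by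
    rw [Nat.card_congr (QkEquiv1 k), nat_card_sigma]
  have hQk2 : Nat.card {q : Wg × (Fin 4 × Fin 4) // ℓ q.1 = k + 1 ∧
      (q.2.1 ≠ q.2.2 ∧ cs.IsRightDescent q.1 q.2.1 ∧ cs.IsRightDescent q.1 q.2.2)} =
      ∑ p : Fin 4 × Fin 4, Nat.card {w : Wg // ℓ w = k + 1 ∧
        (p.1 ≠ p.2 ∧ cs.IsRightDescent w p.1 ∧ cs.IsRightDescent w p.2)} := by
    rw [Nat.card_congr (QkEquiv2 k), nat_card_sigma]
  have hTk : cnt (k+1) = ∑ _w : {w : Wg // ℓ w = k + 1}, 1 := by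
    rw [cnt, Nat.card_eq_fintype_card, ← Finset.card_univ, Finset.card_eq_sum_ones]
  rw [← hPk1, hPk2, hQk2.symm.trans hQk1, hTk, Finset.mul_sum, Finset.mul_sum,
    ← Finset.sum_add_distrib]
  apply Finset.sum_congr rfl
  intro w _
  have hw : w.1 ≠ 1 := by
    intro h
    have := w.2
    rw [h, cs.length_one] at this
    omega
  rw [two_mul_dcard w.1 hw]
  omega

end CountIdentities

section Series
open scoped Classical

noncomputable def Aser (i : Fin 4) : PowerSeries ℤ := PowerSeries.mk fun k => (acnt i k : ℤ)
noncomputable def Bser (i j : Fin 4) : PowerSeries ℤ := PowerSeries.mk fun k => (bcnt i j k : ℤ)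
noncomputable def Sser : PowerSeries ℤ := ∑ i : Fin 4, Aser i
noncomputable def Pser : PowerSeries ℤ :=
  ∑ p : Fin 4 × Fin 4, (if p.1 ≠ p.2 then Bser p.1 p.2 else 0)

lemma coeff_poincare (k : ℕ) : (coeff k) poincare18 = (cnt k : ℤ) := by
  rw [poincare18, coeff_mk]
  rfl

lemma hA (i : Fin 4) : (1 + X) * Aser i = poincare18 := by
  have e : (1 + X) * Aser i = Aser i + X^1 * Aser i := by ring
  rw [e]
  ext k
  simp only [map_add, coeff_X_pow_mul', coeff_poincare, Aser, coeff_mk]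
  cases k with
  | zero =>
    have h0 : ¬ ((1:ℕ) ≤ 0) := by omega
    rw [if_neg h0, add_zero]
    exact_mod_cast (E2count_zero i).symm
  | succ k =>
    rw [if_pos (by omega : 1 ≤ k + 1)]
    have := E2count i k
    simp only [Nat.add_sub_cancel]
    push_cast
    omega

lemma hB {i j : Fin 4} (hij : i ≠ j) : (1 + 2*X + 2*X^2 + X^3) * Bser i j = poincare18 := by
  have e : (1 + 2*X + 2*X^2 + X^3) * Bser i j =
      Bser i j + (X^1 * Bser i j + X^1 * Bser i j) + (X^2 * Bser i j + X^2 * Bser i j)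
        + X^3 * Bser i j := by ring
  rw [e]
  ext k
  simp only [map_add, coeff_X_pow_mul', coeff_poincare]
  have e3 := E3count hij k
  rw [Fin.sum_univ_six] at e3
  rw [show lam (0 : Fin 6) = 0 by decide, show lam (1 : Fin 6) = 1 by decide,
    show lam (2 : Fin 6) = 1 by decide, show lam (3 : Fin 6) = 2 by decide,
    show lam (4 : Fin 6) = 2 by decide, show lam (5 : Fin 6) = 3 by decide] at e3
  rw [scard, scard, scard, scard] at e3
  rw [e3]
  simp only [Bser, coeff_mk, bcnt, Nat.sub_zero]
  push_cast [apply_ite (fun n : ℕ => (n : ℤ))]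
  split_ifs <;> push_cast <;> omega

end Series

section Final
open scoped Classical

lemma qcnt_eq (p : Fin 4 × Fin 4) (m : ℕ) :
    (Nat.card {w : Wg // ℓ w = m ∧
      (p.1 ≠ p.2 ∧ cs.IsRightDescent w p.1 ∧ cs.IsRightDescent w p.2)} : ℤ) =
    (coeff m) (X^3 * (if p.1 ≠ p.2 then Bser p.1 p.2 else 0)) := by
  rw [coeff_X_pow_mul', pair_shift m, scard]
  by_cases hne : p.1 ≠ p.2
  · rw [if_pos hne]
    split_ifs with h3
    · rw [Bser, coeff_mk, bcnt]
      congr 1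
      apply Nat.card_congr
      apply Equiv.subtypeEquivRight
      intro v
      tauto
    · norm_num
  · rw [if_neg hne]
    split_ifs with h3
    · have he : IsEmpty {v : Wg // ℓ v = m - 3 ∧
          (p.1 ≠ p.2 ∧ ¬ cs.IsRightDescent v p.1 ∧ ¬ cs.IsRightDescent v p.2)} :=
        ⟨fun v => v.2.2.1 (not_not.mp hne)⟩
      rw [Nat.card_of_isEmpty]
      simp
    · simp

lemma hE1s : X^1 * Sser + X^1 * Sser + 1 + 1 = poincare18 + poincare18 + X^3 * Pser := by
  ext k
  rw [show X^3 * Pser = ∑ p : Fin 4 × Fin 4, X^3 * (if p.1 ≠ p.2 then Bser p.1 p.2 else 0) from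
    by rw [Pser, Finset.mul_sum]]
  simp only [map_add, coeff_X_pow_mul', coeff_one, coeff_poincare, map_sum]
  cases k with
  | zero =>
    have h0 : ¬ ((1:ℕ) ≤ 0) := by omega
    have h3 : ¬ ((3:ℕ) ≤ 0) := by omega
    simp only [if_neg h0, if_pos rfl, coeff_X_pow_mul', if_neg h3, Finset.sum_const_zero,
      cnt_zero]
    norm_num
  | succ k =>
    have h1 : (1:ℕ) ≤ k + 1 := by omega
    have hne1 : (k + 1 : ℕ) ≠ 0 := by omega
    rw [if_pos h1, if_neg hne1]
    have hsum : ∀ p : Fin 4 × Fin 4, p ∈ (Finset.univ : Finset (Fin 4 × Fin 4)) →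
        (if 3 ≤ k + 1 then (coeff (k + 1 - 3)) (if p.1 ≠ p.2 then Bser p.1 p.2 else 0)
          else 0) =
        (Nat.card {w : Wg // ℓ w = k + 1 ∧
          (p.1 ≠ p.2 ∧ cs.IsRightDescent w p.1 ∧ cs.IsRightDescent w p.2)} : ℤ) := by
      intro p _
      have hq := (qcnt_eq p (k+1)).symm
      rwa [coeff_X_pow_mul'] at hq
    rw [Finset.sum_congr rfl hsum]
    have hS : (coeff k) Sser = ∑ i : Fin 4, (acnt i k : ℤ) := by
      rw [Sser, map_sum]
      apply Finset.sum_congr rfl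
      intro i _
      rw [Aser, coeff_mk]
    rw [Nat.add_sub_cancel, hS]
    have e1 := E1count k
    have e1' : 2 * ∑ i : Fin 4, (acnt i k : ℤ) =
        2 * (cnt (k+1) : ℤ) + ∑ p : Fin 4 × Fin 4, (Nat.card {w : Wg // ℓ w = k + 1 ∧
          (p.1 ≠ p.2 ∧ cs.IsRightDescent w p.1 ∧ cs.IsRightDescent w p.2)} : ℤ) := by
      exact_mod_cast e1
    linarith

lemma hPser : (1 + 2*X + 2*X^2 + X^3) * Pser = 12 * poincare18 := by
  rw [Pser, Finset.mul_sum]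
  have hterm : ∀ p : Fin 4 × Fin 4, p ∈ (Finset.univ : Finset (Fin 4 × Fin 4)) →
      (1 + 2*X + 2*X^2 + X^3) * (if p.1 ≠ p.2 then Bser p.1 p.2 else 0) =
      (if p.1 ≠ p.2 then poincare18 else 0) := by
    intro p _
    split_ifs with h
    · exact hB h
    · rw [mul_zero]
  rw [Finset.sum_congr rfl hterm, Finset.sum_ite, Finset.sum_const_zero, add_zero,
    Finset.sum_const]
  rw [show (Finset.univ.filter (fun p : Fin 4 × Fin 4 => p.1 ≠ p.2)).card = 12 from by decide]
  rw [nsmul_eq_mul]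
  norm_num

lemma hSser : (1 + X) * Sser = 4 * poincare18 := by
  rw [Sser, Finset.mul_sum, Finset.sum_congr rfl (fun i _ => hA i), Finset.sum_const]
  rw [Finset.card_univ, nsmul_eq_mul]
  norm_num

lemma hE1' : 2*X*Sser + 2 = 2*poincare18 + X^3*Pser := by
  linear_combination hE1s

theorem stmt_18 :
    (1 - 2 * X - 2 * X ^ 2 + 3 * X ^ 3) * poincare18 =
      (1 + X) * (1 + X + X ^ 2) := by
  have h2ne : (2 : PowerSeries ℤ) ≠ 0 := by
    intro h
    have h' := congrArg (constantCoeff) h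
    rw [map_ofNat, map_zero] at h'
    norm_num at h' 
  have h1Xne : (1 + X : PowerSeries ℤ) ≠ 0 := fun h => by
    simpa using congrArg (constantCoeff) h
  have T2 : (2 : PowerSeries ℤ) * ((1 + X) *
      ((1 - 2 * X - 2 * X ^ 2 + 3 * X ^ 3) * poincare18 - (1 + X) * (1 + X + X ^ 2))) = 0 := by
    linear_combination (2*X*(1+2*X+2*X^2+X^3)) * hSser - ((1+X)*(1+2*X+2*X^2+X^3)) * hE1'
      - (X^3*(1+X)) * hPser
  rcases mul_eq_zero.mp T2 with h | h
  · exact absurd h h2ne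
  rcases mul_eq_zero.mp h with h | h
  · exact absurd h h1Xne
  · exact sub_eq_zero.mp h

end Final
end
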